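/- Let n ≥ 8, let U ⊂ {1, ..., n} with |U| = m, 4 ≤ m ≤ n/2, and let i, j, f, g ∈ U be distinct. Let u be the degree-1 polynomial u(x) = x_{ij} - x_{jf} + x_{fg} - x_{gi}. Then for every polynomial w of degree at most 1 on ℝ^{n(n-1)/2}, (1/|X|) Σ_{x∈X} h_U(x) u(x) w(x) = (2(m-2)/((n-2)(m-1))) ⟨u, w⟩, where ⟨·,·⟩ is the inner product making the monomial basis {1} ∪ {x_{pq} : 1 ≤ p < q ≤ n} orthonormal; i.e., u is an eigenvector of the matrix A_U of the quadratic form q_{h_U} with eigenvalue 2(m-2)/((n-2)(m-1)). -/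

import Mathlib

open Finset
noncomputable section
open scoped Classical

/-- Index type for the coordinates of `ℝ^{n(n-1)/2}`: unordered pairs of distinct
vertices of the complete graph `K_n` on `Fin n`. -/
abbrev EdgeIdx (n : ℕ) := {e : Sym2 (Fin n) // ¬ e.IsDiag}

/-- The incidence vector of the Hamiltonian cycle of `K_n` determined by a
permutation `σ` of the vertices (the cycle visiting `σ 0, σ 1, …, σ (n-1)` in order). -/
def cycleVec (n : ℕ) (σ : Equiv.Perm (Fin n)) : EdgeIdx n → ℝ :=
  fun e => if ∃ i : Fin n, (e : Sym2 (Fin n)) = s(σ i, σ (finRotate n i)) then 1 else 0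

/-- `X`, the (finite) set of incidence vectors of Hamiltonian cycles of `K_n`. -/
def hamX (n : ℕ) : Finset (EdgeIdx n → ℝ) := Finset.image (cycleVec n) Finset.univ

/-- The entry `x_{ij}` of a vector `x : EdgeIdx n → ℝ` at the unordered pair `{i,j}`
(conventionally `0` if `i = j`). -/
def xval {n : ℕ} (x : EdgeIdx n → ℝ) (i j : Fin n) : ℝ :=
  if h : i = j then 0 else x ⟨s(i, j), by simpa [Sym2.isDiag_iff_proj_eq] using h⟩

/-- The subtour elimination function `h_U(x) = c (Σ_{u∈U, v∉U} x_{uv} - 2)` with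
`c = (n-1)/(2(m(n-m)+1-n))`, where `m = |U|` (so that `h_U` has average value `1`
on `X`). -/
def hU {n : ℕ} (U : Finset (Fin n)) (x : EdgeIdx n → ℝ) : ℝ :=
  (((n : ℝ) - 1) / (2 * ((U.card : ℝ) * ((n : ℝ) - (U.card : ℝ)) + 1 - (n : ℝ)))) *
    ((∑ u ∈ U, ∑ v ∈ Uᶜ, xval x u v) - 2)

/-- Coefficient vector (in the monomial basis `{x_{pq}}`) of the degree-1 polynomial
`x_{ab} - x_{bc} + x_{cd} - x_{da}` for distinct vertices `a, b, c, d`. -/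
def quadCoef {n : ℕ} (a b c d : Fin n) : EdgeIdx n → ℝ := fun e =>
  (if (e : Sym2 (Fin n)) = s(a, b) then 1 else 0)
    - (if (e : Sym2 (Fin n)) = s(b, c) then 1 else 0)
    + (if (e : Sym2 (Fin n)) = s(c, d) then 1 else 0)
    - (if (e : Sym2 (Fin n)) = s(d, a) then 1 else 0)

namespace SubAux

variable {n : ℕ}

lemma xval_comm (x : EdgeIdx n → ℝ) (a b : Fin n) : xval x a b = xval x b a := by
  unfold xval
  by_cases h : a = b
  · subst h; simp
  · rw [dif_neg h, dif_neg (Ne.symm h)]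
    congr 1
    exact Subtype.ext (Sym2.eq_swap)

lemma mem_hamX {x : EdgeIdx n → ℝ} (hx : x ∈ hamX n) : ∃ σ, cycleVec n σ = x := by
  simpa [hamX] using hx

lemma hamX_nonempty : (hamX n).Nonempty := ⟨cycleVec n 1, by simp [hamX]⟩

/-- relabeling of edges by a vertex permutation -/
def eMap (π : Equiv.Perm (Fin n)) (e : EdgeIdx n) : EdgeIdx n :=
  ⟨Sym2.map π e.1, by
    obtain ⟨e, he⟩ := e
    induction e using Sym2.ind with
    | _ a b =>
      rw [Sym2.map_pair_eq]
      simp only [Sym2.isDiag_iff_proj_eq] at he ⊢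
      exact fun h => he (π.injective h)⟩

lemma eMap_eMap (π τ : Equiv.Perm (Fin n)) (e : EdgeIdx n) :
    eMap π (eMap τ e) = eMap (π * τ) e := by
  unfold eMap
  apply Subtype.ext
  simp only [Sym2.map_map]
  rfl

lemma eMap_inv_right (π : Equiv.Perm (Fin n)) (e : EdgeIdx n) :
    eMap π (eMap π⁻¹ e) = e := by
  rw [eMap_eMap, mul_inv_cancel]
  apply Subtype.ext
  simp [eMap]

lemma eMap_inv_left (π : Equiv.Perm (Fin n)) (e : EdgeIdx n) :
    eMap π⁻¹ (eMap π e) = e := by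
  rw [eMap_eMap, inv_mul_cancel]
  apply Subtype.ext
  simp [eMap]

lemma cycleVec_eMap (π σ : Equiv.Perm (Fin n)) :
    (fun e => cycleVec n σ (eMap π e)) = cycleVec n (π⁻¹ * σ) := by
  funext e
  unfold cycleVec eMap
  simp only
  congr 1
  simp only [eq_iff_iff]
  constructor
  · rintro ⟨i, hi⟩
    refine ⟨i, ?_⟩
    have := congrArg (Sym2.map ⇑π⁻¹) hi
    rw [Sym2.map_map] at this
    have h2 : Sym2.map (⇑π⁻¹ ∘ ⇑π) (e : Sym2 (Fin n)) = (e : Sym2 (Fin n)) := by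
      have : (⇑π⁻¹ ∘ ⇑π) = id := by
        funext z; simp
      rw [this, Sym2.map_id, id_eq]
    rw [h2] at this
    rw [this, Sym2.map_pair_eq]
    rfl
  · rintro ⟨i, hi⟩
    refine ⟨i, ?_⟩
    rw [hi, Sym2.map_pair_eq]
    simp only [Equiv.Perm.mul_apply]
    congr 1 <;> simp

lemma relabel_mem (π : Equiv.Perm (Fin n)) {x : EdgeIdx n → ℝ} (hx : x ∈ hamX n) :
    (fun e => x (eMap π e)) ∈ hamX n := by
  obtain ⟨σ, rfl⟩ := mem_hamX hx
  rw [cycleVec_eMap]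
  simp [hamX]

lemma sum_relabel (π : Equiv.Perm (Fin n)) (F : (EdgeIdx n → ℝ) → ℝ) :
    ∑ x ∈ hamX n, F (fun e => x (eMap π e)) = ∑ x ∈ hamX n, F x := by
  refine Finset.sum_nbij' (fun x => fun e => x (eMap π e)) (fun x => fun e => x (eMap π⁻¹ e))
    (fun x hx => relabel_mem π hx) (fun x hx => relabel_mem π⁻¹ hx)
    (fun x _ => funext fun e => congrArg x (eMap_inv_right π e))
    (fun x _ => funext fun e => congrArg x (eMap_inv_left π e))
    (fun x _ => rfl)

lemma xval_relabel (π : Equiv.Perm (Fin n)) (x : EdgeIdx n → ℝ) (a b : Fin n) :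
    xval (fun e => x (eMap π e)) a b = xval x (π a) (π b) := by
  unfold xval
  by_cases h : a = b
  · subst h; simp
  · rw [dif_neg h, dif_neg (fun hc => h (π.injective hc))]
    congr 1

lemma exists_perm_map {α : Type*} [Fintype α] [DecidableEq α] {k : ℕ} (f h : Fin k → α)
    (hf : Function.Injective f) (hh : Function.Injective h) :
    ∃ π : Equiv.Perm α, ∀ i, π (f i) = h i := by
  classical
  have hcard : Fintype.card ↥(Set.range f)ᶜ = Fintype.card ↥(Set.range h)ᶜ := by
    rw [Fintype.card_compl_set, Fintype.card_compl_set,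
      Set.card_range_of_injective hf, Set.card_range_of_injective hh]
  refine ⟨((Equiv.Set.sumCompl (Set.range f)).symm.trans
    ((((Equiv.ofInjective f hf).symm.trans (Equiv.ofInjective h hh)).sumCongr
      (Fintype.equivOfCardEq hcard)).trans (Equiv.Set.sumCompl (Set.range h)))), ?_⟩
  intro i
  simp only [Equiv.trans_apply]
  rw [Equiv.Set.sumCompl_symm_apply_of_mem (Set.mem_range_self i)]
  have h1 : (Equiv.ofInjective f hf).symm ⟨f i, Set.mem_range_self i⟩ = i := by
    rw [Equiv.symm_apply_eq, Equiv.ofInjective_apply]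
  simp only [Equiv.sumCongr_apply, Sum.map_inl, Equiv.trans_apply, h1]
  rw [Equiv.Set.sumCompl_apply_inl, Equiv.ofInjective_apply]

lemma inj2 {α : Type*} {a b : α} (h1 : a ≠ b) : Function.Injective ![a, b] := by
  intro x y hxy
  fin_cases x <;> fin_cases y <;> simp_all

lemma inj3 {α : Type*} {a b c : α} (h1 : a ≠ b) (h2 : a ≠ c) (h3 : b ≠ c) :
    Function.Injective ![a, b, c] := by
  intro x y hxy
  fin_cases x <;> fin_cases y <;> simp_all <;> tauto

lemma inj4 {α : Type*} {a b c d : α} (h1 : a ≠ b) (h2 : a ≠ c) (h3 : a ≠ d)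
    (h4 : b ≠ c) (h5 : b ≠ d) (h6 : c ≠ d) :
    Function.Injective ![a, b, c, d] := by
  intro x y hxy
  fin_cases x <;> fin_cases y <;> simp_all <;> tauto

lemma inj5 {α : Type*} {a b c d e : α} (h1 : a ≠ b) (h2 : a ≠ c) (h3 : a ≠ d) (h4 : a ≠ e)
    (h5 : b ≠ c) (h6 : b ≠ d) (h7 : b ≠ e) (h8 : c ≠ d) (h9 : c ≠ e) (h10 : d ≠ e) :
    Function.Injective ![a, b, c, d, e] := by
  intro x y hxy
  fin_cases x <;> fin_cases y <;> simp_all <;> tauto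

lemma inj6 {α : Type*} {a b c d e f : α} (h1 : a ≠ b) (h2 : a ≠ c) (h3 : a ≠ d) (h4 : a ≠ e)
    (h5 : a ≠ f) (h6 : b ≠ c) (h7 : b ≠ d) (h8 : b ≠ e) (h9 : b ≠ f) (h10 : c ≠ d)
    (h11 : c ≠ e) (h12 : c ≠ f) (h13 : d ≠ e) (h14 : d ≠ f) (h15 : e ≠ f) :
    Function.Injective ![a, b, c, d, e, f] := by
  rw [← List.nodup_ofFn]
  simp [List.ofFn_succ, h1, h2, h3, h4, h5, h6, h7, h8, h9, h10, h11, h12, h13, h14, h15,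
    Ne.symm h1, Ne.symm h2, Ne.symm h3, Ne.symm h4, Ne.symm h5, Ne.symm h6, Ne.symm h7,
    Ne.symm h8, Ne.symm h9, Ne.symm h10, Ne.symm h11, Ne.symm h12, Ne.symm h13, Ne.symm h14,
    Ne.symm h15]

open Fin.CommRing in
lemma fin_shift_ne {k : ℕ} (r : ℕ) (h1 : 0 < r) (h2 : r < k + 1) (A : Fin (k + 1)) :
    A + (r : Fin (k + 1)) ≠ A := by
  intro h
  have h0 : (r : Fin (k + 1)) = 0 := by
    have := add_eq_left.mp h
    exact this
  have := congrArg Fin.val h0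
  rw [Fin.val_cast_of_lt h2] at this
  simp at this
  omega

open Fin.CommRing in
lemma fin_cast1 {k : ℕ} : ((1 : ℕ) : Fin (k + 1)) = 1 := by push_cast; ring
open Fin.CommRing in
lemma fin_cast2 {k : ℕ} : ((2 : ℕ) : Fin (k + 1)) = 1 + 1 := by push_cast; ring
open Fin.CommRing in
lemma fin_cast3 {k : ℕ} : ((3 : ℕ) : Fin (k + 1)) = 1 + 1 + 1 := by push_cast; ring

lemma no_shift1 {k : ℕ} (hk : 7 ≤ k) (A : Fin (k + 1)) : A + 1 ≠ A := by
  have := fin_shift_ne 1 (by omega) (by omega) A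
  rwa [fin_cast1] at this

lemma no_shift2 {k : ℕ} (hk : 7 ≤ k) (A : Fin (k + 1)) : A + 1 + 1 ≠ A := by
  have := fin_shift_ne 2 (by omega) (by omega) A
  rw [fin_cast2] at this
  rwa [← add_assoc] at this

lemma no_shift3 {k : ℕ} (hk : 7 ≤ k) (A : Fin (k + 1)) : A + 1 + 1 + 1 ≠ A := by
  have := fin_shift_ne 3 (by omega) (by omega) A
  rw [fin_cast3] at this
  rwa [← add_assoc, ← add_assoc] at this

lemma adj_of_xval_ne {k : ℕ} (σ : Equiv.Perm (Fin (k + 1))) {a b : Fin (k + 1)} (hab : a ≠ b)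
    (h : xval (cycleVec (k + 1) σ) a b ≠ 0) :
    σ⁻¹ b = σ⁻¹ a + 1 ∨ σ⁻¹ a = σ⁻¹ b + 1 := by
  have hcond : ∃ t, s(a, b) = s(σ t, σ (finRotate (k + 1) t)) := by
    by_contra hc
    rw [xval, dif_neg hab] at h
    exact h (if_neg hc)
  obtain ⟨t, ht⟩ := hcond
  rw [finRotate_succ_apply, Sym2.eq_iff] at ht
  rcases ht with ⟨h1, h2⟩ | ⟨h1, h2⟩
  · left
    rw [h1, h2, Equiv.Perm.coe_inv, Equiv.symm_apply_apply, Equiv.symm_apply_apply]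
  · right
    rw [h1, h2, Equiv.Perm.coe_inv, Equiv.symm_apply_apply, Equiv.symm_apply_apply]

lemma xval01 {n : ℕ} {x : EdgeIdx n → ℝ} (hx : x ∈ hamX n) (a b : Fin n) :
    xval x a b = 0 ∨ xval x a b = 1 := by
  obtain ⟨σ, rfl⟩ := mem_hamX hx
  unfold xval cycleVec
  by_cases h : a = b
  · left; rw [dif_pos h]
  · rw [dif_neg h]
    split
    · right; rfl
    · left; rfl

lemma xval_nonneg {n : ℕ} {x : EdgeIdx n → ℝ} (hx : x ∈ hamX n) (a b : Fin n) :
    0 ≤ xval x a b := by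
  rcases xval01 hx a b with h | h <;> rw [h] <;> norm_num

lemma xval_sq {n : ℕ} {x : EdgeIdx n → ℝ} (hx : x ∈ hamX n) (a b : Fin n) :
    xval x a b * xval x a b = xval x a b := by
  rcases xval01 hx a b with h | h <;> rw [h] <;> ring

lemma degree_sum {n : ℕ} (hn : 8 ≤ n) {x : EdgeIdx n → ℝ} (hx : x ∈ hamX n) (u : Fin n) :
    ∑ v ∈ univ.erase u, xval x u v = 2 := by
  obtain ⟨k, rfl⟩ : ∃ k, n = k + 1 := ⟨n - 1, by omega⟩
  have hk : 7 ≤ k := by omega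
  obtain ⟨σ, rfl⟩ := mem_hamX hx
  have hσs : σ (σ⁻¹ u) = u := σ.apply_symm_apply u
  set s : Fin (k + 1) := σ⁻¹ u with hs
  set p : Fin (k + 1) := σ (s + 1) with hp
  set q : Fin (k + 1) := σ (s - 1) with hq
  have hsub : s - 1 + 1 = s := sub_add_cancel s 1
  have hpq : p ≠ q := by
    intro h
    have h2 : s + 1 = s - 1 := σ.injective h
    have h3 : s + 1 + 1 = s := by rw [h2, hsub]
    exact no_shift2 hk s h3
  have hpu : p ≠ u := by
    intro h
    have h2 : s + 1 = s := σ.injective (by rw [← hp, h, ← hσs])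
    exact no_shift1 hk s h2
  have hqu : q ≠ u := by
    intro h
    have h2 : s - 1 = s := σ.injective (by rw [← hq, h, ← hσs])
    have h3 := congrArg (fun z => z + 1) h2
    rw [hsub] at h3
    exact no_shift1 hk s h3.symm
  have key : ∀ v ∈ univ.erase u, xval (cycleVec (k + 1) σ) u v
      = (if v = p then (1 : ℝ) else 0) + (if v = q then 1 else 0) := by
    intro v hv
    have hvu : v ≠ u := (mem_erase.mp hv).1
    rw [xval, dif_neg (fun h => hvu h.symm)]
    show (if ∃ t, s(u, v) = s(σ t, σ (finRotate (k + 1) t)) then (1:ℝ) else 0) = _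
    by_cases h1 : v = p
    · rw [if_pos ⟨s, by rw [finRotate_succ_apply, hσs, h1, hp]⟩, if_pos h1,
        if_neg (by rw [h1]; exact hpq)]
      norm_num
    · by_cases h2 : v = q
      · rw [if_pos ⟨s - 1, by rw [finRotate_succ_apply, hsub, hσs, h2, hq, Sym2.eq_swap]⟩,
          if_neg h1, if_pos h2]
        norm_num
      · rw [if_neg, if_neg h1, if_neg h2]
        · norm_num
        · rintro ⟨t, ht⟩
          rw [finRotate_succ_apply, Sym2.eq_iff] at ht
          rcases ht with ⟨ha, hb⟩ | ⟨ha, hb⟩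
          · apply h1
            have : t = s := by rw [hs, ha, Equiv.Perm.coe_inv, Equiv.symm_apply_apply]
            rw [hb, this, hp]
          · apply h2
            have : t + 1 = s := by rw [hs, ha, Equiv.Perm.coe_inv, Equiv.symm_apply_apply]
            have ht' : t = s - 1 := by rw [← this]; exact (add_sub_cancel_right t 1).symm
            rw [hb, ht', hq]
  rw [Finset.sum_congr rfl key, Finset.sum_add_distrib]
  rw [Finset.sum_ite_eq' (univ.erase u) p (fun _ => (1:ℝ)),
    Finset.sum_ite_eq' (univ.erase u) q (fun _ => (1:ℝ))]
  rw [if_pos (mem_erase.mpr ⟨hpu, mem_univ p⟩), if_pos (mem_erase.mpr ⟨hqu, mem_univ q⟩)]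
  norm_num

lemma triangle_zero {n : ℕ} (hn : 8 ≤ n) {x : EdgeIdx n → ℝ} (hx : x ∈ hamX n)
    {a b c : Fin n} (hab : a ≠ b) (hbc : b ≠ c) (hca : c ≠ a) :
    xval x a b * xval x b c * xval x c a = 0 := by
  obtain ⟨k, rfl⟩ : ∃ k, n = k + 1 := ⟨n - 1, by omega⟩
  have hk : 7 ≤ k := by omega
  obtain ⟨σ, rfl⟩ := mem_hamX hx
  by_contra h
  have h1 : xval (cycleVec (k+1) σ) a b ≠ 0 := by intro h0; apply h; rw [h0]; ring
  have h2 : xval (cycleVec (k+1) σ) b c ≠ 0 := by intro h0; apply h; rw [h0]; ring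
  have h3 : xval (cycleVec (k+1) σ) c a ≠ 0 := by intro h0; apply h; rw [h0]; ring
  have R1 := adj_of_xval_ne σ hab h1
  have R2 := adj_of_xval_ne σ hbc h2
  have R3 := adj_of_xval_ne σ hca h3
  set A := σ⁻¹ a
  set B := σ⁻¹ b
  set C := σ⁻¹ c
  have hAB : A ≠ B := fun h => hab (by
    have := congrArg σ h
    simpa [A, B] using this)
  have hBC : B ≠ C := fun h => hbc (by
    have := congrArg σ h
    simpa [B, C] using this)
  have hCA : C ≠ A := fun h => hca (by
    have := congrArg σ h
    simpa [C, A] using this)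
  rcases R1 with r1 | r1 <;> rcases R2 with r2 | r2 <;> rcases R3 with r3 | r3
  · -- B = A+1, C = B+1, A = C+1
    rw [r2, r1] at r3
    exact no_shift3 hk A r3.symm
  · -- B = A+1, C = B+1, C = A+1
    exact no_shift1 hk (A + 1) (by rw [← r1, ← r2, r3, r1])
  · -- B = A+1, B = C+1, A = C+1
    exact hAB (by rw [r3, ← r2])
  · -- B = A+1, B = C+1, C = A+1
    exact no_shift1 hk (A + 1) (by rw [← r3, ← r2, r1, ← r3])
  · -- A = B+1, C = B+1, A = C+1
    exact no_shift1 hk C (by rw [← r3, r1, ← r2])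
  · -- A = B+1, C = B+1, C = A+1
    exact no_shift1 hk A (by rw [← r3, r2, ← r1])
  · -- A = B+1, B = C+1, A = C+1
    exact no_shift1 hk (C + 1) (by rw [← r2, ← r1, r3, ← r2])
  · -- A = B+1, B = C+1, C = A+1
    rw [r1, r2] at r3
    exact no_shift3 hk C r3.symm

lemma star_zero {n : ℕ} (hn : 8 ≤ n) {x : EdgeIdx n → ℝ} (hx : x ∈ hamX n)
    {a b c d : Fin n} (hab : a ≠ b) (hac : a ≠ c) (had : a ≠ d)
    (hbc : b ≠ c) (hbd : b ≠ d) (hcd : c ≠ d) :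
    xval x a b * xval x a c * xval x a d = 0 := by
  rcases xval01 hx a b with h1 | h1
  · rw [h1]; ring
  rcases xval01 hx a c with h2 | h2
  · rw [h2]; ring
  rcases xval01 hx a d with h3 | h3
  · rw [h3]; ring
  exfalso
  have hsub : ({b, c, d} : Finset (Fin n)) ⊆ univ.erase a := by
    intro v hv
    simp only [Finset.mem_insert, Finset.mem_singleton] at hv
    rcases hv with rfl | rfl | rfl <;> exact mem_erase.mpr ⟨by tauto, mem_univ _⟩
  have hge : ∑ v ∈ ({b, c, d} : Finset (Fin n)), xval x a v ≤ ∑ v ∈ univ.erase a, xval x a v :=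
    Finset.sum_le_sum_of_subset_of_nonneg hsub (fun v _ _ => xval_nonneg hx a v)
  rw [degree_sum hn hx a] at hge
  rw [Finset.sum_insert (by simp [hbc, hbd]), Finset.sum_insert (by simp [hcd]),
    Finset.sum_singleton, h1, h2, h3] at hge
  norm_num at hge

lemma relabel1 {n : ℕ} (π : Equiv.Perm (Fin n)) (a b : Fin n) :
    ∑ x ∈ hamX n, xval x (π a) (π b) = ∑ x ∈ hamX n, xval x a b := by
  rw [← sum_relabel π (fun y => xval y a b)]
  exact Finset.sum_congr rfl (fun x _ => (xval_relabel π x a b).symm)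

lemma relabel2 {n : ℕ} (π : Equiv.Perm (Fin n)) (a b c d : Fin n) :
    ∑ x ∈ hamX n, xval x (π a) (π b) * xval x (π c) (π d)
      = ∑ x ∈ hamX n, xval x a b * xval x c d := by
  rw [← sum_relabel π (fun y => xval y a b * xval y c d)]
  exact Finset.sum_congr rfl (fun x _ => by
    rw [xval_relabel π x a b, xval_relabel π x c d])

lemma relabel3 {n : ℕ} (π : Equiv.Perm (Fin n)) (a b c d e f : Fin n) :
    ∑ x ∈ hamX n, xval x (π a) (π b) * xval x (π c) (π d) * xval x (π e) (π f)
      = ∑ x ∈ hamX n, xval x a b * xval x c d * xval x e f := by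
  rw [← sum_relabel π (fun y => xval y a b * xval y c d * xval y e f)]
  exact Finset.sum_congr rfl (fun x _ => by
    rw [xval_relabel π x a b, xval_relabel π x c d, xval_relabel π x e f])

lemma cut_identity {n : ℕ} (hn : 8 ≤ n) (P : (EdgeIdx n → ℝ) → ℝ) (c : Fin n) :
    ∑ v ∈ univ.erase c, ∑ x ∈ hamX n, xval x c v * P x = 2 * ∑ x ∈ hamX n, P x := by
  rw [Finset.sum_comm]
  calc ∑ x ∈ hamX n, ∑ v ∈ univ.erase c, xval x c v * P x
      = ∑ x ∈ hamX n, 2 * P x := by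
        refine sum_congr rfl fun x hx => ?_
        rw [← Finset.sum_mul, degree_sum hn hx c]
    _ = 2 * ∑ x ∈ hamX n, P x := by rw [Finset.mul_sum]

lemma moment1 {n : ℕ} (hn : 8 ≤ n) {a b : Fin n} (hab : a ≠ b) :
    ∑ x ∈ hamX n, xval x a b = 2 / ((n : ℝ) - 1) * ((hamX n).card : ℝ) := by
  have hId := cut_identity hn (fun _ => (1 : ℝ)) a
  simp only [mul_one] at hId
  rw [Finset.sum_const, nsmul_eq_mul, mul_one] at hId
  have hswap : ∀ v ∈ univ.erase a, ∑ x ∈ hamX n, xval x a v = ∑ x ∈ hamX n, xval x a b := by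
    intro v hv
    have hva : v ≠ a := (mem_erase.mp hv).1
    obtain ⟨π, hπ⟩ := exists_perm_map ![a, b] ![a, v] (inj2 hab) (inj2 (Ne.symm hva))
    have h0 : π a = a := by simpa using hπ 0
    have h1 : π b = v := by simpa using hπ 1
    calc ∑ x ∈ hamX n, xval x a v
        = ∑ x ∈ hamX n, xval x (π a) (π b) := by rw [h0, h1]
      _ = ∑ x ∈ hamX n, xval x a b := relabel1 π a b
  rw [Finset.sum_congr rfl hswap, Finset.sum_const, Finset.card_erase_of_mem (mem_univ a),
    Finset.card_univ, Fintype.card_fin, nsmul_eq_mul] at hId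
  have hc : ((n - 1 : ℕ) : ℝ) = (n : ℝ) - 1 := by
    rw [Nat.cast_sub (by omega)]; norm_num
  rw [hc] at hId
  have hn1 : (n : ℝ) - 1 ≠ 0 := by
    have : (8 : ℝ) ≤ (n : ℝ) := by exact_mod_cast hn
    intro h; nlinarith
  field_simp
  linarith [hId]

lemma moment2s {n : ℕ} (hn : 8 ≤ n) {a b c : Fin n} (hab : a ≠ b) (hbc : b ≠ c) (hac : a ≠ c) :
    ∑ x ∈ hamX n, xval x a b * xval x b c
      = 2 / (((n : ℝ) - 1) * ((n : ℝ) - 2)) * ((hamX n).card : ℝ) := by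
  have hId := cut_identity hn (fun y => xval y a b) b
  rw [moment1 hn hab] at hId
  have hmem1 : a ∈ univ.erase b := mem_erase.mpr ⟨hab, mem_univ a⟩
  rw [← Finset.add_sum_erase _ _ hmem1] at hId
  have e1 : ∑ x ∈ hamX n, xval x b a * xval x a b = 2 / ((n : ℝ) - 1) * ((hamX n).card : ℝ) := by
    rw [show (∑ x ∈ hamX n, xval x b a * xval x a b) = ∑ x ∈ hamX n, xval x a b from
      Finset.sum_congr rfl fun x hx => by rw [xval_comm x b a]; exact xval_sq hx a b]
    exact moment1 hn hab
  rw [e1] at hId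
  have e2 : ∀ v ∈ (univ.erase b).erase a, ∑ x ∈ hamX n, xval x b v * xval x a b
      = ∑ x ∈ hamX n, xval x a b * xval x b c := by
    intro v hv
    have hva : v ≠ a := (mem_erase.mp hv).1
    have hvb : v ≠ b := (mem_erase.mp (mem_erase.mp hv).2).1
    obtain ⟨π, hπ⟩ := exists_perm_map ![a, b, c] ![a, b, v]
      (inj3 hab hac hbc) (inj3 hab (Ne.symm hva) (Ne.symm hvb))
    have h0 : π a = a := by simpa using hπ 0
    have h1 : π b = b := by simpa using hπ 1
    have h2 : π c = v := by simpa using hπ 2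
    calc ∑ x ∈ hamX n, xval x b v * xval x a b
        = ∑ x ∈ hamX n, xval x a b * xval x b v :=
          Finset.sum_congr rfl fun x _ => mul_comm _ _
      _ = ∑ x ∈ hamX n, xval x (π a) (π b) * xval x (π b) (π c) := by rw [h0, h1, h2]
      _ = ∑ x ∈ hamX n, xval x a b * xval x b c := relabel2 π a b b c
  rw [Finset.sum_congr rfl e2, Finset.sum_const] at hId
  have hcard : ((univ.erase b).erase a).card = n - 2 := by
    rw [Finset.card_erase_of_mem hmem1, Finset.card_erase_of_mem (mem_univ b),
      Finset.card_univ, Fintype.card_fin]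
    omega
  rw [hcard, nsmul_eq_mul] at hId
  have hc : ((n - 2 : ℕ) : ℝ) = (n : ℝ) - 2 := by
    rw [Nat.cast_sub (by omega)]; norm_num
  rw [hc] at hId
  have h8 : (8 : ℝ) ≤ (n : ℝ) := by exact_mod_cast hn
  have hn1 : (n : ℝ) - 1 ≠ 0 := by intro h; nlinarith
  have hn2 : (n : ℝ) - 2 ≠ 0 := by intro h; nlinarith
  field_simp
  field_simp at hId
  nlinarith [hId]

lemma moment2d {n : ℕ} (hn : 8 ≤ n) {a b c d : Fin n} (hab : a ≠ b) (hac : a ≠ c) (had : a ≠ d)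
    (hbc : b ≠ c) (hbd : b ≠ d) (hcd : c ≠ d) :
    ∑ x ∈ hamX n, xval x a b * xval x c d
      = 4 / (((n : ℝ) - 1) * ((n : ℝ) - 2)) * ((hamX n).card : ℝ) := by
  have hId := cut_identity hn (fun y => xval y a b) c
  rw [moment1 hn hab] at hId
  have hmem1 : a ∈ univ.erase c := mem_erase.mpr ⟨hac, mem_univ a⟩
  rw [← Finset.add_sum_erase _ _ hmem1] at hId
  have hmem2 : b ∈ (univ.erase c).erase a :=
    mem_erase.mpr ⟨Ne.symm hab, mem_erase.mpr ⟨hbc, mem_univ b⟩⟩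
  rw [← Finset.add_sum_erase _ _ hmem2] at hId
  rw [moment2s hn (Ne.symm hac) hab (Ne.symm hbc)] at hId
  have e2 : ∑ x ∈ hamX n, xval x c b * xval x a b
      = 2 / (((n : ℝ) - 1) * ((n : ℝ) - 2)) * ((hamX n).card : ℝ) := by
    rw [show (∑ x ∈ hamX n, xval x c b * xval x a b) = ∑ x ∈ hamX n, xval x c b * xval x b a from
      Finset.sum_congr rfl fun x _ => by rw [xval_comm x a b]]
    exact moment2s hn (Ne.symm hbc) (Ne.symm hab) (Ne.symm hac)
  rw [e2] at hId
  have e3 : ∀ v ∈ ((univ.erase c).erase a).erase b, ∑ x ∈ hamX n, xval x c v * xval x a b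
      = ∑ x ∈ hamX n, xval x a b * xval x c d := by
    intro v hv
    have hvb : v ≠ b := (mem_erase.mp hv).1
    have hva : v ≠ a := (mem_erase.mp (mem_erase.mp hv).2).1
    have hvc : v ≠ c := (mem_erase.mp (mem_erase.mp (mem_erase.mp hv).2).2).1
    obtain ⟨π, hπ⟩ := exists_perm_map ![a, b, c, d] ![a, b, c, v]
      (inj4 hab hac had hbc hbd hcd)
      (inj4 hab hac (Ne.symm hva) hbc (Ne.symm hvb) (Ne.symm hvc))
    have h0 : π a = a := by simpa using hπ 0
    have h1 : π b = b := by simpa using hπ 1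
    have h2 : π c = c := by simpa using hπ 2
    have h3 : π d = v := by simpa using hπ 3
    calc ∑ x ∈ hamX n, xval x c v * xval x a b
        = ∑ x ∈ hamX n, xval x a b * xval x c v :=
          Finset.sum_congr rfl fun x _ => mul_comm _ _
      _ = ∑ x ∈ hamX n, xval x (π a) (π b) * xval x (π c) (π d) := by rw [h0, h1, h2, h3]
      _ = ∑ x ∈ hamX n, xval x a b * xval x c d := relabel2 π a b c d
  rw [Finset.sum_congr rfl e3, Finset.sum_const] at hId
  have hcard : (((univ.erase c).erase a).erase b).card = n - 3 := by
    rw [Finset.card_erase_of_mem hmem2, Finset.card_erase_of_mem hmem1,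
      Finset.card_erase_of_mem (mem_univ c), Finset.card_univ, Fintype.card_fin]
    omega
  rw [hcard, nsmul_eq_mul] at hId
  have hc : ((n - 3 : ℕ) : ℝ) = (n : ℝ) - 3 := by
    rw [Nat.cast_sub (by omega)]; norm_num
  rw [hc] at hId
  have h8 : (8 : ℝ) ≤ (n : ℝ) := by exact_mod_cast hn
  have hn1 : (n : ℝ) - 1 ≠ 0 := by intro h; nlinarith
  have hn2 : (n : ℝ) - 2 ≠ 0 := by intro h; nlinarith
  have hn3 : (n : ℝ) - 3 ≠ 0 := by intro h; nlinarith
  have hstep : ((n : ℝ) - 3) * (∑ x ∈ hamX n, xval x a b * xval x c d)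
      = 2 * (2 / ((n : ℝ) - 1) * ((hamX n).card : ℝ))
        - 2 / (((n : ℝ) - 1) * ((n : ℝ) - 2)) * ((hamX n).card : ℝ)
        - 2 / (((n : ℝ) - 1) * ((n : ℝ) - 2)) * ((hamX n).card : ℝ) := by linarith [hId]
  have hval : ((n : ℝ) - 3) * (4 / (((n : ℝ) - 1) * ((n : ℝ) - 2)) * ((hamX n).card : ℝ))
      = 2 * (2 / ((n : ℝ) - 1) * ((hamX n).card : ℝ))
        - 2 / (((n : ℝ) - 1) * ((n : ℝ) - 2)) * ((hamX n).card : ℝ)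
        - 2 / (((n : ℝ) - 1) * ((n : ℝ) - 2)) * ((hamX n).card : ℝ) := by
    field_simp
    ring
  exact mul_left_cancel₀ hn3 (hstep.trans hval.symm)

lemma moment3p {n : ℕ} (hn : 8 ≤ n) {a b c d : Fin n} (hab : a ≠ b) (hac : a ≠ c) (had : a ≠ d)
    (hbc : b ≠ c) (hbd : b ≠ d) (hcd : c ≠ d) :
    ∑ x ∈ hamX n, xval x a b * xval x b c * xval x c d
      = 2 / (((n : ℝ) - 1) * ((n : ℝ) - 2) * ((n : ℝ) - 3)) * ((hamX n).card : ℝ) := by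
  have hId := cut_identity hn (fun y => xval y a b * xval y b c) c
  rw [moment2s hn hab hbc hac] at hId
  have hmem1 : a ∈ univ.erase c := mem_erase.mpr ⟨hac, mem_univ a⟩
  rw [← Finset.add_sum_erase _ _ hmem1] at hId
  have e1 : ∑ x ∈ hamX n, xval x c a * (xval x a b * xval x b c) = 0 := by
    refine Finset.sum_eq_zero fun x hx => ?_
    have ht := triangle_zero hn hx hab hbc (Ne.symm hac)
    linear_combination ht
  rw [e1] at hId
  have hmem2 : b ∈ (univ.erase c).erase a :=
    mem_erase.mpr ⟨Ne.symm hab, mem_erase.mpr ⟨hbc, mem_univ b⟩⟩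
  rw [← Finset.add_sum_erase _ _ hmem2] at hId
  have e2 : ∑ x ∈ hamX n, xval x c b * (xval x a b * xval x b c)
      = ∑ x ∈ hamX n, xval x a b * xval x b c := by
    refine Finset.sum_congr rfl fun x hx => ?_
    rw [xval_comm x c b]
    linear_combination (xval x a b) * (xval_sq hx b c)
  rw [e2, moment2s hn hab hbc hac] at hId
  have e3 : ∀ v ∈ ((univ.erase c).erase a).erase b,
      ∑ x ∈ hamX n, xval x c v * (xval x a b * xval x b c)
      = ∑ x ∈ hamX n, xval x a b * xval x b c * xval x c d := by
    intro v hv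
    have hvb : v ≠ b := (mem_erase.mp hv).1
    have hva : v ≠ a := (mem_erase.mp (mem_erase.mp hv).2).1
    have hvc : v ≠ c := (mem_erase.mp (mem_erase.mp (mem_erase.mp hv).2).2).1
    obtain ⟨π, hπ⟩ := exists_perm_map ![a, b, c, d] ![a, b, c, v]
      (inj4 hab hac had hbc hbd hcd)
      (inj4 hab hac (Ne.symm hva) hbc (Ne.symm hvb) (Ne.symm hvc))
    have h0 : π a = a := by simpa using hπ 0
    have h1 : π b = b := by simpa using hπ 1
    have h2 : π c = c := by simpa using hπ 2
    have h3 : π d = v := by simpa using hπ 3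
    calc ∑ x ∈ hamX n, xval x c v * (xval x a b * xval x b c)
        = ∑ x ∈ hamX n, xval x a b * xval x b c * xval x c v :=
          Finset.sum_congr rfl fun x _ => by ring
      _ = ∑ x ∈ hamX n, xval x (π a) (π b) * xval x (π b) (π c) * xval x (π c) (π d) := by
          rw [h0, h1, h2, h3]
      _ = ∑ x ∈ hamX n, xval x a b * xval x b c * xval x c d := relabel3 π a b b c c d
  rw [Finset.sum_congr rfl e3, Finset.sum_const] at hId
  have hcard : (((univ.erase c).erase a).erase b).card = n - 3 := by
    rw [Finset.card_erase_of_mem hmem2, Finset.card_erase_of_mem hmem1,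
      Finset.card_erase_of_mem (mem_univ c), Finset.card_univ, Fintype.card_fin]
    omega
  rw [hcard, nsmul_eq_mul] at hId
  have hc : ((n - 3 : ℕ) : ℝ) = (n : ℝ) - 3 := by
    rw [Nat.cast_sub (by omega)]; norm_num
  rw [hc] at hId
  have h8 : (8 : ℝ) ≤ (n : ℝ) := by exact_mod_cast hn
  have hn1 : (n : ℝ) - 1 ≠ 0 := by intro h; nlinarith
  have hn2 : (n : ℝ) - 2 ≠ 0 := by intro h; nlinarith
  have hn3 : (n : ℝ) - 3 ≠ 0 := by intro h; nlinarith
  have hstep : ((n : ℝ) - 3) * (∑ x ∈ hamX n, xval x a b * xval x b c * xval x c d)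
      = 2 * (2 / (((n : ℝ) - 1) * ((n : ℝ) - 2)) * ((hamX n).card : ℝ))
        - 2 / (((n : ℝ) - 1) * ((n : ℝ) - 2)) * ((hamX n).card : ℝ) := by linarith [hId]
  have hval : ((n : ℝ) - 3)
        * (2 / (((n : ℝ) - 1) * ((n : ℝ) - 2) * ((n : ℝ) - 3)) * ((hamX n).card : ℝ))
      = 2 * (2 / (((n : ℝ) - 1) * ((n : ℝ) - 2)) * ((hamX n).card : ℝ))
        - 2 / (((n : ℝ) - 1) * ((n : ℝ) - 2)) * ((hamX n).card : ℝ) := by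
    field_simp
    ring
  exact mul_left_cancel₀ hn3 (hstep.trans hval.symm)

lemma moment3pd {n : ℕ} (hn : 8 ≤ n) {a b c d e : Fin n}
    (hab : a ≠ b) (hac : a ≠ c) (had : a ≠ d) (hae : a ≠ e)
    (hbc : b ≠ c) (hbd : b ≠ d) (hbe : b ≠ e) (hcd : c ≠ d) (hce : c ≠ e) (hde : d ≠ e) :
    ∑ x ∈ hamX n, xval x a b * xval x b c * xval x d e
      = 4 / (((n : ℝ) - 1) * ((n : ℝ) - 2) * ((n : ℝ) - 3)) * ((hamX n).card : ℝ) := by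
  have hId := cut_identity hn (fun y => xval y a b * xval y b c) d
  rw [moment2s hn hab hbc hac] at hId
  have hmem1 : a ∈ univ.erase d := mem_erase.mpr ⟨had, mem_univ a⟩
  rw [← Finset.add_sum_erase _ _ hmem1] at hId
  have e1 : ∑ x ∈ hamX n, xval x d a * (xval x a b * xval x b c)
      = 2 / (((n : ℝ) - 1) * ((n : ℝ) - 2) * ((n : ℝ) - 3)) * ((hamX n).card : ℝ) := by
    calc ∑ x ∈ hamX n, xval x d a * (xval x a b * xval x b c)
        = ∑ x ∈ hamX n, xval x d a * xval x a b * xval x b c :=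
          Finset.sum_congr rfl fun x _ => by ring
      _ = _ := moment3p hn (Ne.symm had) (Ne.symm hbd) (Ne.symm hcd) hab hac hbc
  rw [e1] at hId
  have hmem2 : b ∈ (univ.erase d).erase a :=
    mem_erase.mpr ⟨Ne.symm hab, mem_erase.mpr ⟨hbd, mem_univ b⟩⟩
  rw [← Finset.add_sum_erase _ _ hmem2] at hId
  have e2 : ∑ x ∈ hamX n, xval x d b * (xval x a b * xval x b c) = 0 := by
    refine Finset.sum_eq_zero fun x hx => ?_
    rw [xval_comm x d b, xval_comm x a b]
    linear_combination star_zero hn hx hbd (Ne.symm hab) hbc (Ne.symm had) (Ne.symm hcd) hac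
  rw [e2] at hId
  have hmem3 : c ∈ ((univ.erase d).erase a).erase b :=
    mem_erase.mpr ⟨Ne.symm hbc, mem_erase.mpr ⟨Ne.symm hac, mem_erase.mpr ⟨hcd, mem_univ c⟩⟩⟩
  rw [← Finset.add_sum_erase _ _ hmem3] at hId
  have e3 : ∑ x ∈ hamX n, xval x d c * (xval x a b * xval x b c)
      = 2 / (((n : ℝ) - 1) * ((n : ℝ) - 2) * ((n : ℝ) - 3)) * ((hamX n).card : ℝ) := by
    calc ∑ x ∈ hamX n, xval x d c * (xval x a b * xval x b c)
        = ∑ x ∈ hamX n, xval x a b * xval x b c * xval x c d :=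
          Finset.sum_congr rfl fun x _ => by rw [xval_comm x d c]; ring
      _ = _ := moment3p hn hab hac had hbc hbd hcd
  rw [e3] at hId
  have e4 : ∀ v ∈ (((univ.erase d).erase a).erase b).erase c,
      ∑ x ∈ hamX n, xval x d v * (xval x a b * xval x b c)
      = ∑ x ∈ hamX n, xval x a b * xval x b c * xval x d e := by
    intro v hv
    have hvc : v ≠ c := (mem_erase.mp hv).1
    have hvb : v ≠ b := (mem_erase.mp (mem_erase.mp hv).2).1
    have hva : v ≠ a := (mem_erase.mp (mem_erase.mp (mem_erase.mp hv).2).2).1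
    have hvd : v ≠ d :=
      (mem_erase.mp (mem_erase.mp (mem_erase.mp (mem_erase.mp hv).2).2).2).1
    obtain ⟨π, hπ⟩ := exists_perm_map ![a, b, c, d, e] ![a, b, c, d, v]
      (inj5 hab hac had hae hbc hbd hbe hcd hce hde)
      (inj5 hab hac had (Ne.symm hva) hbc hbd (Ne.symm hvb) hcd (Ne.symm hvc) (Ne.symm hvd))
    have h0 : π a = a := by simpa using hπ 0
    have h1 : π b = b := by simpa using hπ 1
    have h2 : π c = c := by simpa using hπ 2
    have h3 : π d = d := by simpa using hπ 3
    have h4 : π e = v := by simpa using hπ 4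
    calc ∑ x ∈ hamX n, xval x d v * (xval x a b * xval x b c)
        = ∑ x ∈ hamX n, xval x a b * xval x b c * xval x d v :=
          Finset.sum_congr rfl fun x _ => by ring
      _ = ∑ x ∈ hamX n, xval x (π a) (π b) * xval x (π b) (π c) * xval x (π d) (π e) := by
          rw [h0, h1, h2, h3, h4]
      _ = ∑ x ∈ hamX n, xval x a b * xval x b c * xval x d e := relabel3 π a b b c d e
  rw [Finset.sum_congr rfl e4, Finset.sum_const] at hId
  have hcard : ((((univ.erase d).erase a).erase b).erase c).card = n - 4 := by
    rw [Finset.card_erase_of_mem hmem3, Finset.card_erase_of_mem hmem2,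
      Finset.card_erase_of_mem hmem1, Finset.card_erase_of_mem (mem_univ d),
      Finset.card_univ, Fintype.card_fin]
    omega
  rw [hcard, nsmul_eq_mul] at hId
  have hc : ((n - 4 : ℕ) : ℝ) = (n : ℝ) - 4 := by
    rw [Nat.cast_sub (by omega)]; norm_num
  rw [hc] at hId
  have h8 : (8 : ℝ) ≤ (n : ℝ) := by exact_mod_cast hn
  have hn1 : (n : ℝ) - 1 ≠ 0 := by intro h; nlinarith
  have hn2 : (n : ℝ) - 2 ≠ 0 := by intro h; nlinarith
  have hn3 : (n : ℝ) - 3 ≠ 0 := by intro h; nlinarith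
  have hn4 : (n : ℝ) - 4 ≠ 0 := by intro h; nlinarith
  have hstep : ((n : ℝ) - 4) * (∑ x ∈ hamX n, xval x a b * xval x b c * xval x d e)
      = 2 * (2 / (((n : ℝ) - 1) * ((n : ℝ) - 2)) * ((hamX n).card : ℝ))
        - 2 / (((n : ℝ) - 1) * ((n : ℝ) - 2) * ((n : ℝ) - 3)) * ((hamX n).card : ℝ)
        - 2 / (((n : ℝ) - 1) * ((n : ℝ) - 2) * ((n : ℝ) - 3)) * ((hamX n).card : ℝ) := by
    linarith [hId]
  have hval : ((n : ℝ) - 4)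
        * (4 / (((n : ℝ) - 1) * ((n : ℝ) - 2) * ((n : ℝ) - 3)) * ((hamX n).card : ℝ))
      = 2 * (2 / (((n : ℝ) - 1) * ((n : ℝ) - 2)) * ((hamX n).card : ℝ))
        - 2 / (((n : ℝ) - 1) * ((n : ℝ) - 2) * ((n : ℝ) - 3)) * ((hamX n).card : ℝ)
        - 2 / (((n : ℝ) - 1) * ((n : ℝ) - 2) * ((n : ℝ) - 3)) * ((hamX n).card : ℝ) := by
    field_simp
    ring
  exact mul_left_cancel₀ hn4 (hstep.trans hval.symm)

lemma moment3m {n : ℕ} (hn : 8 ≤ n) {a b c d e f : Fin n}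
    (hab : a ≠ b) (hac : a ≠ c) (had : a ≠ d) (hae : a ≠ e) (haf : a ≠ f)
    (hbc : b ≠ c) (hbd : b ≠ d) (hbe : b ≠ e) (hbf : b ≠ f)
    (hcd : c ≠ d) (hce : c ≠ e) (hcf : c ≠ f) (hde : d ≠ e) (hdf : d ≠ f) (hef : e ≠ f) :
    ∑ x ∈ hamX n, xval x a b * xval x c d * xval x e f
      = 8 / (((n : ℝ) - 1) * ((n : ℝ) - 2) * ((n : ℝ) - 3)) * ((hamX n).card : ℝ) := by
  have hId := cut_identity hn (fun y => xval y a b * xval y c d) e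
  rw [moment2d hn hab hac had hbc hbd hcd] at hId
  have hmem1 : a ∈ univ.erase e := mem_erase.mpr ⟨hae, mem_univ a⟩
  rw [← Finset.add_sum_erase _ _ hmem1] at hId
  have e1 : ∑ x ∈ hamX n, xval x e a * (xval x a b * xval x c d)
      = 4 / (((n : ℝ) - 1) * ((n : ℝ) - 2) * ((n : ℝ) - 3)) * ((hamX n).card : ℝ) := by
    calc ∑ x ∈ hamX n, xval x e a * (xval x a b * xval x c d)
        = ∑ x ∈ hamX n, xval x e a * xval x a b * xval x c d :=
          Finset.sum_congr rfl fun x _ => by ring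
      _ = _ := moment3pd hn (Ne.symm hae) (Ne.symm hbe) (Ne.symm hce) (Ne.symm hde)
            hab hac had hbc hbd hcd
  rw [e1] at hId
  have hmem2 : b ∈ (univ.erase e).erase a :=
    mem_erase.mpr ⟨Ne.symm hab, mem_erase.mpr ⟨hbe, mem_univ b⟩⟩
  rw [← Finset.add_sum_erase _ _ hmem2] at hId
  have e2 : ∑ x ∈ hamX n, xval x e b * (xval x a b * xval x c d)
      = 4 / (((n : ℝ) - 1) * ((n : ℝ) - 2) * ((n : ℝ) - 3)) * ((hamX n).card : ℝ) := by
    calc ∑ x ∈ hamX n, xval x e b * (xval x a b * xval x c d)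
        = ∑ x ∈ hamX n, xval x e b * xval x b a * xval x c d :=
          Finset.sum_congr rfl fun x _ => by rw [xval_comm x a b]; ring
      _ = _ := moment3pd hn (Ne.symm hbe) (Ne.symm hae) (Ne.symm hce) (Ne.symm hde)
            (Ne.symm hab) hbc hbd hac had hcd
  rw [e2] at hId
  have hmem3 : c ∈ ((univ.erase e).erase a).erase b :=
    mem_erase.mpr ⟨Ne.symm hbc, mem_erase.mpr ⟨Ne.symm hac, mem_erase.mpr ⟨hce, mem_univ c⟩⟩⟩
  rw [← Finset.add_sum_erase _ _ hmem3] at hId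
  have e3 : ∑ x ∈ hamX n, xval x e c * (xval x a b * xval x c d)
      = 4 / (((n : ℝ) - 1) * ((n : ℝ) - 2) * ((n : ℝ) - 3)) * ((hamX n).card : ℝ) := by
    calc ∑ x ∈ hamX n, xval x e c * (xval x a b * xval x c d)
        = ∑ x ∈ hamX n, xval x e c * xval x c d * xval x a b :=
          Finset.sum_congr rfl fun x _ => by ring
      _ = _ := moment3pd hn (Ne.symm hce) (Ne.symm hde) (Ne.symm hae) (Ne.symm hbe)
            hcd (Ne.symm hac) (Ne.symm hbc) (Ne.symm had) (Ne.symm hbd) hab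
  rw [e3] at hId
  have hmem4 : d ∈ (((univ.erase e).erase a).erase b).erase c :=
    mem_erase.mpr ⟨Ne.symm hcd, mem_erase.mpr ⟨Ne.symm hbd,
      mem_erase.mpr ⟨Ne.symm had, mem_erase.mpr ⟨hde, mem_univ d⟩⟩⟩⟩
  rw [← Finset.add_sum_erase _ _ hmem4] at hId
  have e4 : ∑ x ∈ hamX n, xval x e d * (xval x a b * xval x c d)
      = 4 / (((n : ℝ) - 1) * ((n : ℝ) - 2) * ((n : ℝ) - 3)) * ((hamX n).card : ℝ) := by
    calc ∑ x ∈ hamX n, xval x e d * (xval x a b * xval x c d)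
        = ∑ x ∈ hamX n, xval x e d * xval x d c * xval x a b :=
          Finset.sum_congr rfl fun x _ => by rw [xval_comm x c d]; ring
      _ = _ := moment3pd hn (Ne.symm hde) (Ne.symm hce) (Ne.symm hae) (Ne.symm hbe)
            (Ne.symm hcd) (Ne.symm had) (Ne.symm hbd) (Ne.symm hac) (Ne.symm hbc) hab
  rw [e4] at hId
  have e5 : ∀ v ∈ ((((univ.erase e).erase a).erase b).erase c).erase d,
      ∑ x ∈ hamX n, xval x e v * (xval x a b * xval x c d)
      = ∑ x ∈ hamX n, xval x a b * xval x c d * xval x e f := by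
    intro v hv
    have hvd : v ≠ d := (mem_erase.mp hv).1
    have hvc : v ≠ c := (mem_erase.mp (mem_erase.mp hv).2).1
    have hvb : v ≠ b := (mem_erase.mp (mem_erase.mp (mem_erase.mp hv).2).2).1
    have hva : v ≠ a :=
      (mem_erase.mp (mem_erase.mp (mem_erase.mp (mem_erase.mp hv).2).2).2).1
    have hve : v ≠ e :=
      (mem_erase.mp (mem_erase.mp (mem_erase.mp (mem_erase.mp (mem_erase.mp hv).2).2).2).2).1
    obtain ⟨π, hπ⟩ := exists_perm_map ![a, b, c, d, e, f] ![a, b, c, d, e, v]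
      (inj6 hab hac had hae haf hbc hbd hbe hbf hcd hce hcf hde hdf hef)
      (inj6 hab hac had hae (Ne.symm hva) hbc hbd hbe (Ne.symm hvb) hcd hce (Ne.symm hvc)
        hde (Ne.symm hvd) (Ne.symm hve))
    have h0 : π a = a := by simpa using hπ 0
    have h1 : π b = b := by simpa using hπ 1
    have h2 : π c = c := by simpa using hπ 2
    have h3 : π d = d := by simpa using hπ 3
    have h4 : π e = e := by simpa using hπ 4
    have h5 : π f = v := by simpa using hπ 5
    calc ∑ x ∈ hamX n, xval x e v * (xval x a b * xval x c d)
        = ∑ x ∈ hamX n, xval x a b * xval x c d * xval x e v :=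
          Finset.sum_congr rfl fun x _ => by ring
      _ = ∑ x ∈ hamX n, xval x (π a) (π b) * xval x (π c) (π d) * xval x (π e) (π f) := by
          rw [h0, h1, h2, h3, h4, h5]
      _ = ∑ x ∈ hamX n, xval x a b * xval x c d * xval x e f := relabel3 π a b c d e f
  rw [Finset.sum_congr rfl e5, Finset.sum_const] at hId
  have hcard : (((((univ.erase e).erase a).erase b).erase c).erase d).card = n - 5 := by
    rw [Finset.card_erase_of_mem hmem4, Finset.card_erase_of_mem hmem3,
      Finset.card_erase_of_mem hmem2, Finset.card_erase_of_mem hmem1,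
      Finset.card_erase_of_mem (mem_univ e), Finset.card_univ, Fintype.card_fin]
    omega
  rw [hcard, nsmul_eq_mul] at hId
  have hc : ((n - 5 : ℕ) : ℝ) = (n : ℝ) - 5 := by
    rw [Nat.cast_sub (by omega)]; norm_num
  rw [hc] at hId
  have h8 : (8 : ℝ) ≤ (n : ℝ) := by exact_mod_cast hn
  have hn1 : (n : ℝ) - 1 ≠ 0 := by intro h; nlinarith
  have hn2 : (n : ℝ) - 2 ≠ 0 := by intro h; nlinarith
  have hn3 : (n : ℝ) - 3 ≠ 0 := by intro h; nlinarith
  have hn5 : (n : ℝ) - 5 ≠ 0 := by intro h; nlinarith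
  have hstep : ((n : ℝ) - 5) * (∑ x ∈ hamX n, xval x a b * xval x c d * xval x e f)
      = 2 * (4 / (((n : ℝ) - 1) * ((n : ℝ) - 2)) * ((hamX n).card : ℝ))
        - 4 * (4 / (((n : ℝ) - 1) * ((n : ℝ) - 2) * ((n : ℝ) - 3)) * ((hamX n).card : ℝ)) := by
    linarith [hId]
  have hval : ((n : ℝ) - 5)
        * (8 / (((n : ℝ) - 1) * ((n : ℝ) - 2) * ((n : ℝ) - 3)) * ((hamX n).card : ℝ))
      = 2 * (4 / (((n : ℝ) - 1) * ((n : ℝ) - 2)) * ((hamX n).card : ℝ))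
        - 4 * (4 / (((n : ℝ) - 1) * ((n : ℝ) - 2) * ((n : ℝ) - 3)) * ((hamX n).card : ℝ)) := by
    field_simp
    ring
  exact mul_left_cancel₀ hn5 (hstep.trans hval.symm)

section CutTerms

variable {n : ℕ} {i j f g : Fin n}

lemma cutA_i (hn : 8 ≤ n) (hij : i ≠ j) (hif : i ≠ f) (hig : i ≠ g)
    (hjf : j ≠ f) (hjg : j ≠ g) (hfg : f ≠ g)
    {b : Fin n} (hbi : b ≠ i) (hbj : b ≠ j) (hbf : b ≠ f) (hbg : b ≠ g) :
    ∑ x ∈ hamX n, xval x i b * ((xval x i j - xval x j f + xval x f g - xval x g i) * xval x i j)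
      = 2 / (((n : ℝ) - 1) * ((n : ℝ) - 2)) * ((hamX n).card : ℝ)
        + 2 / (((n : ℝ) - 1) * ((n : ℝ) - 2) * ((n : ℝ) - 3)) * ((hamX n).card : ℝ) := by
  have hsplit : ∑ x ∈ hamX n,
        xval x i b * ((xval x i j - xval x j f + xval x f g - xval x g i) * xval x i j)
      = ((∑ x ∈ hamX n, xval x i b * xval x i j * xval x i j)
          - ∑ x ∈ hamX n, xval x i b * xval x j f * xval x i j)
        + (∑ x ∈ hamX n, xval x i b * xval x f g * xval x i j)
        - ∑ x ∈ hamX n, xval x i b * xval x g i * xval x i j := by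
    rw [← Finset.sum_sub_distrib, ← Finset.sum_add_distrib, ← Finset.sum_sub_distrib]
    exact Finset.sum_congr rfl fun x _ => by ring
  have h1 : ∑ x ∈ hamX n, xval x i b * xval x i j * xval x i j
      = 2 / (((n : ℝ) - 1) * ((n : ℝ) - 2)) * ((hamX n).card : ℝ) := by
    calc ∑ x ∈ hamX n, xval x i b * xval x i j * xval x i j
        = ∑ x ∈ hamX n, xval x b i * xval x i j := Finset.sum_congr rfl fun x hx => by
          rw [xval_comm x i b]; linear_combination (xval x b i) * (xval_sq hx i j)
      _ = _ := moment2s hn hbi hij hbj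
  have h2 : ∑ x ∈ hamX n, xval x i b * xval x j f * xval x i j
      = 2 / (((n : ℝ) - 1) * ((n : ℝ) - 2) * ((n : ℝ) - 3)) * ((hamX n).card : ℝ) := by
    calc ∑ x ∈ hamX n, xval x i b * xval x j f * xval x i j
        = ∑ x ∈ hamX n, xval x b i * xval x i j * xval x j f :=
          Finset.sum_congr rfl fun x _ => by rw [xval_comm x i b]; ring
      _ = _ := moment3p hn hbi hbj hbf hij hif hjf
  have h3 : ∑ x ∈ hamX n, xval x i b * xval x f g * xval x i j
      = 4 / (((n : ℝ) - 1) * ((n : ℝ) - 2) * ((n : ℝ) - 3)) * ((hamX n).card : ℝ) := by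
    calc ∑ x ∈ hamX n, xval x i b * xval x f g * xval x i j
        = ∑ x ∈ hamX n, xval x b i * xval x i j * xval x f g :=
          Finset.sum_congr rfl fun x _ => by rw [xval_comm x i b]; ring
      _ = _ := moment3pd hn hbi hbj hbf hbg hij hif hig hjf hjg hfg
  have h4 : ∑ x ∈ hamX n, xval x i b * xval x g i * xval x i j = 0 := by
    refine Finset.sum_eq_zero fun x hx => ?_
    rw [xval_comm x g i]
    exact star_zero hn hx (Ne.symm hbi) hig hij hbg hbj (Ne.symm hjg)
  rw [hsplit, h1, h2, h3, h4]
  ring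

lemma cutA_j (hn : 8 ≤ n) (hij : i ≠ j) (hif : i ≠ f) (hig : i ≠ g)
    (hjf : j ≠ f) (hjg : j ≠ g) (hfg : f ≠ g)
    {b : Fin n} (hbi : b ≠ i) (hbj : b ≠ j) (hbf : b ≠ f) (hbg : b ≠ g) :
    ∑ x ∈ hamX n, xval x j b * ((xval x i j - xval x j f + xval x f g - xval x g i) * xval x i j)
      = 2 / (((n : ℝ) - 1) * ((n : ℝ) - 2)) * ((hamX n).card : ℝ)
        + 2 / (((n : ℝ) - 1) * ((n : ℝ) - 2) * ((n : ℝ) - 3)) * ((hamX n).card : ℝ) := by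
  have hsplit : ∑ x ∈ hamX n,
        xval x j b * ((xval x i j - xval x j f + xval x f g - xval x g i) * xval x i j)
      = ((∑ x ∈ hamX n, xval x j b * xval x i j * xval x i j)
          - ∑ x ∈ hamX n, xval x j b * xval x j f * xval x i j)
        + (∑ x ∈ hamX n, xval x j b * xval x f g * xval x i j)
        - ∑ x ∈ hamX n, xval x j b * xval x g i * xval x i j := by
    rw [← Finset.sum_sub_distrib, ← Finset.sum_add_distrib, ← Finset.sum_sub_distrib]
    exact Finset.sum_congr rfl fun x _ => by ring
  have h1 : ∑ x ∈ hamX n, xval x j b * xval x i j * xval x i j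
      = 2 / (((n : ℝ) - 1) * ((n : ℝ) - 2)) * ((hamX n).card : ℝ) := by
    calc ∑ x ∈ hamX n, xval x j b * xval x i j * xval x i j
        = ∑ x ∈ hamX n, xval x b j * xval x j i := Finset.sum_congr rfl fun x hx => by
          rw [xval_comm x j b, xval_comm x i j]
          linear_combination (xval x b j) * (xval_sq hx j i)
      _ = _ := moment2s hn hbj (Ne.symm hij) hbi
  have h2 : ∑ x ∈ hamX n, xval x j b * xval x j f * xval x i j = 0 := by
    refine Finset.sum_eq_zero fun x hx => ?_
    rw [xval_comm x i j]
    exact star_zero hn hx (Ne.symm hbj) hjf (Ne.symm hij) hbf hbi (Ne.symm hif)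
  have h3 : ∑ x ∈ hamX n, xval x j b * xval x f g * xval x i j
      = 4 / (((n : ℝ) - 1) * ((n : ℝ) - 2) * ((n : ℝ) - 3)) * ((hamX n).card : ℝ) := by
    calc ∑ x ∈ hamX n, xval x j b * xval x f g * xval x i j
        = ∑ x ∈ hamX n, xval x b j * xval x j i * xval x f g :=
          Finset.sum_congr rfl fun x _ => by rw [xval_comm x j b, xval_comm x i j]; ring
      _ = _ := moment3pd hn hbj hbi hbf hbg (Ne.symm hij) hjf hjg hif hig hfg
  have h4 : ∑ x ∈ hamX n, xval x j b * xval x g i * xval x i j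
      = 2 / (((n : ℝ) - 1) * ((n : ℝ) - 2) * ((n : ℝ) - 3)) * ((hamX n).card : ℝ) := by
    calc ∑ x ∈ hamX n, xval x j b * xval x g i * xval x i j
        = ∑ x ∈ hamX n, xval x b j * xval x j i * xval x i g :=
          Finset.sum_congr rfl fun x _ => by
            rw [xval_comm x j b, xval_comm x i j, xval_comm x g i]; ring
      _ = _ := moment3p hn hbj hbi hbg (Ne.symm hij) hjg hig
  rw [hsplit, h1, h2, h3, h4]
  ring

lemma cutA_f (hn : 8 ≤ n) (hij : i ≠ j) (hif : i ≠ f) (hig : i ≠ g)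
    (hjf : j ≠ f) (hjg : j ≠ g) (hfg : f ≠ g)
    {b : Fin n} (hbi : b ≠ i) (hbj : b ≠ j) (hbf : b ≠ f) (hbg : b ≠ g) :
    ∑ x ∈ hamX n, xval x f b * ((xval x i j - xval x j f + xval x f g - xval x g i) * xval x i j)
      = 4 / (((n : ℝ) - 1) * ((n : ℝ) - 2)) * ((hamX n).card : ℝ)
        - 2 / (((n : ℝ) - 1) * ((n : ℝ) - 2) * ((n : ℝ) - 3)) * ((hamX n).card : ℝ) := by
  have hsplit : ∑ x ∈ hamX n,
        xval x f b * ((xval x i j - xval x j f + xval x f g - xval x g i) * xval x i j)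
      = ((∑ x ∈ hamX n, xval x f b * xval x i j * xval x i j)
          - ∑ x ∈ hamX n, xval x f b * xval x j f * xval x i j)
        + (∑ x ∈ hamX n, xval x f b * xval x f g * xval x i j)
        - ∑ x ∈ hamX n, xval x f b * xval x g i * xval x i j := by
    rw [← Finset.sum_sub_distrib, ← Finset.sum_add_distrib, ← Finset.sum_sub_distrib]
    exact Finset.sum_congr rfl fun x _ => by ring
  have h1 : ∑ x ∈ hamX n, xval x f b * xval x i j * xval x i j
      = 4 / (((n : ℝ) - 1) * ((n : ℝ) - 2)) * ((hamX n).card : ℝ) := by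
    calc ∑ x ∈ hamX n, xval x f b * xval x i j * xval x i j
        = ∑ x ∈ hamX n, xval x f b * xval x i j := Finset.sum_congr rfl fun x hx => by
          linear_combination (xval x f b) * (xval_sq hx i j)
      _ = _ := moment2d hn (Ne.symm hbf) (Ne.symm hif) (Ne.symm hjf) hbi hbj hij
  have h2 : ∑ x ∈ hamX n, xval x f b * xval x j f * xval x i j
      = 2 / (((n : ℝ) - 1) * ((n : ℝ) - 2) * ((n : ℝ) - 3)) * ((hamX n).card : ℝ) := by
    calc ∑ x ∈ hamX n, xval x f b * xval x j f * xval x i j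
        = ∑ x ∈ hamX n, xval x b f * xval x f j * xval x j i :=
          Finset.sum_congr rfl fun x _ => by
            rw [xval_comm x f b, xval_comm x j f, xval_comm x i j]
      _ = _ := moment3p hn hbf hbj hbi (Ne.symm hjf) (Ne.symm hif) (Ne.symm hij)
  have h3 : ∑ x ∈ hamX n, xval x f b * xval x f g * xval x i j
      = 4 / (((n : ℝ) - 1) * ((n : ℝ) - 2) * ((n : ℝ) - 3)) * ((hamX n).card : ℝ) := by
    calc ∑ x ∈ hamX n, xval x f b * xval x f g * xval x i j
        = ∑ x ∈ hamX n, xval x b f * xval x f g * xval x i j :=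
          Finset.sum_congr rfl fun x _ => by rw [xval_comm x f b]
      _ = _ := moment3pd hn hbf hbg hbi hbj hfg (Ne.symm hif) (Ne.symm hjf)
            (Ne.symm hig) (Ne.symm hjg) hij
  have h4 : ∑ x ∈ hamX n, xval x f b * xval x g i * xval x i j
      = 4 / (((n : ℝ) - 1) * ((n : ℝ) - 2) * ((n : ℝ) - 3)) * ((hamX n).card : ℝ) := by
    calc ∑ x ∈ hamX n, xval x f b * xval x g i * xval x i j
        = ∑ x ∈ hamX n, xval x g i * xval x i j * xval x f b :=
          Finset.sum_congr rfl fun x _ => by ring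
      _ = _ := moment3pd hn (Ne.symm hig) (Ne.symm hjg) (Ne.symm hfg) (Ne.symm hbg)
            hij hif (Ne.symm hbi) hjf (Ne.symm hbj) (Ne.symm hbf)
  rw [hsplit, h1, h2, h3, h4]
  ring

lemma cutA_g (hn : 8 ≤ n) (hij : i ≠ j) (hif : i ≠ f) (hig : i ≠ g)
    (hjf : j ≠ f) (hjg : j ≠ g) (hfg : f ≠ g)
    {b : Fin n} (hbi : b ≠ i) (hbj : b ≠ j) (hbf : b ≠ f) (hbg : b ≠ g) :
    ∑ x ∈ hamX n, xval x g b * ((xval x i j - xval x j f + xval x f g - xval x g i) * xval x i j)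
      = 4 / (((n : ℝ) - 1) * ((n : ℝ) - 2)) * ((hamX n).card : ℝ)
        - 2 / (((n : ℝ) - 1) * ((n : ℝ) - 2) * ((n : ℝ) - 3)) * ((hamX n).card : ℝ) := by
  have hsplit : ∑ x ∈ hamX n,
        xval x g b * ((xval x i j - xval x j f + xval x f g - xval x g i) * xval x i j)
      = ((∑ x ∈ hamX n, xval x g b * xval x i j * xval x i j)
          - ∑ x ∈ hamX n, xval x g b * xval x j f * xval x i j)
        + (∑ x ∈ hamX n, xval x g b * xval x f g * xval x i j)
        - ∑ x ∈ hamX n, xval x g b * xval x g i * xval x i j := by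
    rw [← Finset.sum_sub_distrib, ← Finset.sum_add_distrib, ← Finset.sum_sub_distrib]
    exact Finset.sum_congr rfl fun x _ => by ring
  have h1 : ∑ x ∈ hamX n, xval x g b * xval x i j * xval x i j
      = 4 / (((n : ℝ) - 1) * ((n : ℝ) - 2)) * ((hamX n).card : ℝ) := by
    calc ∑ x ∈ hamX n, xval x g b * xval x i j * xval x i j
        = ∑ x ∈ hamX n, xval x g b * xval x i j := Finset.sum_congr rfl fun x hx => by
          linear_combination (xval x g b) * (xval_sq hx i j)
      _ = _ := moment2d hn (Ne.symm hbg) (Ne.symm hig) (Ne.symm hjg) hbi hbj hij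
  have h2 : ∑ x ∈ hamX n, xval x g b * xval x j f * xval x i j
      = 4 / (((n : ℝ) - 1) * ((n : ℝ) - 2) * ((n : ℝ) - 3)) * ((hamX n).card : ℝ) := by
    calc ∑ x ∈ hamX n, xval x g b * xval x j f * xval x i j
        = ∑ x ∈ hamX n, xval x f j * xval x j i * xval x g b :=
          Finset.sum_congr rfl fun x _ => by
            rw [xval_comm x j f, xval_comm x i j]; ring
      _ = _ := moment3pd hn (Ne.symm hjf) (Ne.symm hif) hfg (Ne.symm hbf)
            (Ne.symm hij) hjg (Ne.symm hbj) hig (Ne.symm hbi) (Ne.symm hbg)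
  have h3 : ∑ x ∈ hamX n, xval x g b * xval x f g * xval x i j
      = 4 / (((n : ℝ) - 1) * ((n : ℝ) - 2) * ((n : ℝ) - 3)) * ((hamX n).card : ℝ) := by
    calc ∑ x ∈ hamX n, xval x g b * xval x f g * xval x i j
        = ∑ x ∈ hamX n, xval x b g * xval x g f * xval x i j :=
          Finset.sum_congr rfl fun x _ => by rw [xval_comm x g b, xval_comm x f g]
      _ = _ := moment3pd hn hbg hbf hbi hbj (Ne.symm hfg) (Ne.symm hig) (Ne.symm hjg)
            (Ne.symm hif) (Ne.symm hjf) hij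
  have h4 : ∑ x ∈ hamX n, xval x g b * xval x g i * xval x i j
      = 2 / (((n : ℝ) - 1) * ((n : ℝ) - 2) * ((n : ℝ) - 3)) * ((hamX n).card : ℝ) := by
    calc ∑ x ∈ hamX n, xval x g b * xval x g i * xval x i j
        = ∑ x ∈ hamX n, xval x b g * xval x g i * xval x i j :=
          Finset.sum_congr rfl fun x _ => by rw [xval_comm x g b]
      _ = _ := moment3p hn hbg hbi hbj (Ne.symm hig) (Ne.symm hjg) hij
  rw [hsplit, h1, h2, h3, h4]
  ring

lemma cutA_o (hn : 8 ≤ n) (hij : i ≠ j) (hif : i ≠ f) (hig : i ≠ g)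
    (hjf : j ≠ f) (hjg : j ≠ g) (hfg : f ≠ g)
    {a b : Fin n} (hai : a ≠ i) (haj : a ≠ j) (haf : a ≠ f) (hag : a ≠ g)
    (hbi : b ≠ i) (hbj : b ≠ j) (hbf : b ≠ f) (hbg : b ≠ g) (hab : a ≠ b) :
    ∑ x ∈ hamX n, xval x a b * ((xval x i j - xval x j f + xval x f g - xval x g i) * xval x i j)
      = 4 / (((n : ℝ) - 1) * ((n : ℝ) - 2)) * ((hamX n).card : ℝ) := by
  have hsplit : ∑ x ∈ hamX n,
        xval x a b * ((xval x i j - xval x j f + xval x f g - xval x g i) * xval x i j)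
      = ((∑ x ∈ hamX n, xval x a b * xval x i j * xval x i j)
          - ∑ x ∈ hamX n, xval x a b * xval x j f * xval x i j)
        + (∑ x ∈ hamX n, xval x a b * xval x f g * xval x i j)
        - ∑ x ∈ hamX n, xval x a b * xval x g i * xval x i j := by
    rw [← Finset.sum_sub_distrib, ← Finset.sum_add_distrib, ← Finset.sum_sub_distrib]
    exact Finset.sum_congr rfl fun x _ => by ring
  have h1 : ∑ x ∈ hamX n, xval x a b * xval x i j * xval x i j
      = 4 / (((n : ℝ) - 1) * ((n : ℝ) - 2)) * ((hamX n).card : ℝ) := by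
    calc ∑ x ∈ hamX n, xval x a b * xval x i j * xval x i j
        = ∑ x ∈ hamX n, xval x a b * xval x i j := Finset.sum_congr rfl fun x hx => by
          linear_combination (xval x a b) * (xval_sq hx i j)
      _ = _ := moment2d hn hab hai haj hbi hbj hij
  have h2 : ∑ x ∈ hamX n, xval x a b * xval x j f * xval x i j
      = 4 / (((n : ℝ) - 1) * ((n : ℝ) - 2) * ((n : ℝ) - 3)) * ((hamX n).card : ℝ) := by
    calc ∑ x ∈ hamX n, xval x a b * xval x j f * xval x i j
        = ∑ x ∈ hamX n, xval x f j * xval x j i * xval x a b :=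
          Finset.sum_congr rfl fun x _ => by
            rw [xval_comm x j f, xval_comm x i j]; ring
      _ = _ := moment3pd hn (Ne.symm hjf) (Ne.symm hif) (Ne.symm haf) (Ne.symm hbf)
            (Ne.symm hij) (Ne.symm haj) (Ne.symm hbj) (Ne.symm hai) (Ne.symm hbi) hab
  have h3 : ∑ x ∈ hamX n, xval x a b * xval x f g * xval x i j
      = 8 / (((n : ℝ) - 1) * ((n : ℝ) - 2) * ((n : ℝ) - 3)) * ((hamX n).card : ℝ) := by
    exact moment3m hn hab haf hag hai haj hbf hbg hbi hbj hfg
      (Ne.symm hif) (Ne.symm hjf) (Ne.symm hig) (Ne.symm hjg) hij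
  have h4 : ∑ x ∈ hamX n, xval x a b * xval x g i * xval x i j
      = 4 / (((n : ℝ) - 1) * ((n : ℝ) - 2) * ((n : ℝ) - 3)) * ((hamX n).card : ℝ) := by
    calc ∑ x ∈ hamX n, xval x a b * xval x g i * xval x i j
        = ∑ x ∈ hamX n, xval x g i * xval x i j * xval x a b :=
          Finset.sum_congr rfl fun x _ => by ring
      _ = _ := moment3pd hn (Ne.symm hig) (Ne.symm hjg) (Ne.symm hag) (Ne.symm hbg)
            hij (Ne.symm hai) (Ne.symm hbi) (Ne.symm haj) (Ne.symm hbj) hab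
  rw [hsplit, h1, h2, h3, h4]
  ring

end CutTerms

lemma main_ij {n m : ℕ} (hn : 8 ≤ n) {U : Finset (Fin n)} (hUcard : U.card = m)
    (hm4 : 4 ≤ m) (hmn : 2 * m ≤ n)
    {i j f g : Fin n} (hiU : i ∈ U) (hjU : j ∈ U) (hfU : f ∈ U) (hgU : g ∈ U)
    (hij : i ≠ j) (hif : i ≠ f) (hig : i ≠ g)
    (hjf : j ≠ f) (hjg : j ≠ g) (hfg : f ≠ g) :
    ∑ x ∈ hamX n, hU U x
        * ((xval x i j - xval x j f + xval x f g - xval x g i) * xval x i j)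
      = (2 * ((m : ℝ) - 2) / (((n : ℝ) - 2) * ((m : ℝ) - 1))) * ((hamX n).card : ℝ) := by
  have hmn' : m ≤ n := by omega
  -- expand hU
  have hstep1 : ∑ x ∈ hamX n, hU U x
        * ((xval x i j - xval x j f + xval x f g - xval x g i) * xval x i j)
      = (((n : ℝ) - 1) / (2 * ((m : ℝ) * ((n : ℝ) - (m : ℝ)) + 1 - (n : ℝ))))
          * ∑ x ∈ hamX n, (∑ u ∈ U, ∑ v ∈ Uᶜ, xval x u v)
              * ((xval x i j - xval x j f + xval x f g - xval x g i) * xval x i j)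
        - ((((n : ℝ) - 1) / (2 * ((m : ℝ) * ((n : ℝ) - (m : ℝ)) + 1 - (n : ℝ)))) * 2)
          * ∑ x ∈ hamX n,
              (xval x i j - xval x j f + xval x f g - xval x g i) * xval x i j := by
    rw [Finset.mul_sum, Finset.mul_sum, ← Finset.sum_sub_distrib]
    refine Finset.sum_congr rfl fun x _ => ?_
    rw [hU, hUcard]
    ring
  -- the linear part B
  have hB : ∑ x ∈ hamX n, (xval x i j - xval x j f + xval x f g - xval x g i) * xval x i j
      = 2 / ((n : ℝ) - 1) * ((hamX n).card : ℝ) := by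
    have hsplit : ∑ x ∈ hamX n,
          (xval x i j - xval x j f + xval x f g - xval x g i) * xval x i j
        = ((∑ x ∈ hamX n, xval x i j * xval x i j)
            - ∑ x ∈ hamX n, xval x j f * xval x i j)
          + (∑ x ∈ hamX n, xval x f g * xval x i j)
          - ∑ x ∈ hamX n, xval x g i * xval x i j := by
      rw [← Finset.sum_sub_distrib, ← Finset.sum_add_distrib, ← Finset.sum_sub_distrib]
      exact Finset.sum_congr rfl fun x _ => by ring
    have hb1 : ∑ x ∈ hamX n, xval x i j * xval x i j
        = 2 / ((n : ℝ) - 1) * ((hamX n).card : ℝ) := by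
      calc ∑ x ∈ hamX n, xval x i j * xval x i j
          = ∑ x ∈ hamX n, xval x i j := Finset.sum_congr rfl fun x hx => xval_sq hx i j
        _ = _ := moment1 hn hij
    have hb2 : ∑ x ∈ hamX n, xval x j f * xval x i j
        = 2 / (((n : ℝ) - 1) * ((n : ℝ) - 2)) * ((hamX n).card : ℝ) := by
      calc ∑ x ∈ hamX n, xval x j f * xval x i j
          = ∑ x ∈ hamX n, xval x f j * xval x j i :=
            Finset.sum_congr rfl fun x _ => by rw [xval_comm x j f, xval_comm x i j]
        _ = _ := moment2s hn (Ne.symm hjf) (Ne.symm hij) (Ne.symm hif)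
    have hb3 : ∑ x ∈ hamX n, xval x f g * xval x i j
        = 4 / (((n : ℝ) - 1) * ((n : ℝ) - 2)) * ((hamX n).card : ℝ) :=
      moment2d hn hfg (Ne.symm hif) (Ne.symm hjf) (Ne.symm hig) (Ne.symm hjg) hij
    have hb4 : ∑ x ∈ hamX n, xval x g i * xval x i j
        = 2 / (((n : ℝ) - 1) * ((n : ℝ) - 2)) * ((hamX n).card : ℝ) :=
      moment2s hn (Ne.symm hig) hij (Ne.symm hjg)
    rw [hsplit, hb1, hb2, hb3, hb4]
    ring
  -- the cut part A
  have hA : ∑ x ∈ hamX n, (∑ u ∈ U, ∑ v ∈ Uᶜ, xval x u v)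
        * ((xval x i j - xval x j f + xval x f g - xval x g i) * xval x i j)
      = ((n : ℝ) - (m : ℝ)) * ((4 * (m : ℝ) - 4)
          / (((n : ℝ) - 1) * ((n : ℝ) - 2))) * ((hamX n).card : ℝ) := by
    have hswap : ∑ x ∈ hamX n, (∑ u ∈ U, ∑ v ∈ Uᶜ, xval x u v)
          * ((xval x i j - xval x j f + xval x f g - xval x g i) * xval x i j)
        = ∑ a ∈ U, ∑ b ∈ Uᶜ, ∑ x ∈ hamX n, xval x a b
            * ((xval x i j - xval x j f + xval x f g - xval x g i) * xval x i j) := by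
      calc ∑ x ∈ hamX n, (∑ u ∈ U, ∑ v ∈ Uᶜ, xval x u v)
            * ((xval x i j - xval x j f + xval x f g - xval x g i) * xval x i j)
          = ∑ x ∈ hamX n, ∑ a ∈ U, ∑ b ∈ Uᶜ, xval x a b
              * ((xval x i j - xval x j f + xval x f g - xval x g i) * xval x i j) := by
            refine Finset.sum_congr rfl fun x _ => ?_
            rw [Finset.sum_mul]
            exact Finset.sum_congr rfl fun a _ => by rw [Finset.sum_mul]
        _ = ∑ a ∈ U, ∑ x ∈ hamX n, ∑ b ∈ Uᶜ, xval x a b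
              * ((xval x i j - xval x j f + xval x f g - xval x g i) * xval x i j) :=
            Finset.sum_comm
        _ = ∑ a ∈ U, ∑ b ∈ Uᶜ, ∑ x ∈ hamX n, xval x a b
              * ((xval x i j - xval x j f + xval x f g - xval x g i) * xval x i j) :=
            Finset.sum_congr rfl fun a _ => Finset.sum_comm
    rw [hswap]
    have hmemi : i ∈ U := hiU
    have hmemj : j ∈ U.erase i := mem_erase.mpr ⟨Ne.symm hij, hjU⟩
    have hmemf : f ∈ (U.erase i).erase j :=
      mem_erase.mpr ⟨Ne.symm hjf, mem_erase.mpr ⟨Ne.symm hif, hfU⟩⟩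
    have hmemg : g ∈ ((U.erase i).erase j).erase f :=
      mem_erase.mpr ⟨Ne.symm hfg, mem_erase.mpr ⟨Ne.symm hjg,
        mem_erase.mpr ⟨Ne.symm hig, hgU⟩⟩⟩
    rw [← Finset.add_sum_erase _ _ hmemi, ← Finset.add_sum_erase _ _ hmemj,
      ← Finset.add_sum_erase _ _ hmemf, ← Finset.add_sum_erase _ _ hmemg]
    have hcompl : ∀ b ∈ Uᶜ, b ≠ i ∧ b ≠ j ∧ b ≠ f ∧ b ≠ g := by
      intro b hb
      rw [Finset.mem_compl] at hb
      exact ⟨fun h => hb (h ▸ hiU), fun h => hb (h ▸ hjU),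
        fun h => hb (h ▸ hfU), fun h => hb (h ▸ hgU)⟩
    have hcardC : ((Uᶜ : Finset (Fin n)).card : ℝ) = (n : ℝ) - (m : ℝ) := by
      rw [Finset.card_compl, hUcard, Fintype.card_fin, Nat.cast_sub hmn']
    have hti : ∑ b ∈ Uᶜ, ∑ x ∈ hamX n, xval x i b
          * ((xval x i j - xval x j f + xval x f g - xval x g i) * xval x i j)
        = ((n : ℝ) - (m : ℝ)) * (2 / (((n : ℝ) - 1) * ((n : ℝ) - 2)) * ((hamX n).card : ℝ)
            + 2 / (((n : ℝ) - 1) * ((n : ℝ) - 2) * ((n : ℝ) - 3)) * ((hamX n).card : ℝ)) := by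
      rw [Finset.sum_congr rfl (fun b hb => cutA_i hn hij hif hig hjf hjg hfg
        (hcompl b hb).1 (hcompl b hb).2.1 (hcompl b hb).2.2.1 (hcompl b hb).2.2.2),
        Finset.sum_const, nsmul_eq_mul, hcardC]
    have htj : ∑ b ∈ Uᶜ, ∑ x ∈ hamX n, xval x j b
          * ((xval x i j - xval x j f + xval x f g - xval x g i) * xval x i j)
        = ((n : ℝ) - (m : ℝ)) * (2 / (((n : ℝ) - 1) * ((n : ℝ) - 2)) * ((hamX n).card : ℝ)
            + 2 / (((n : ℝ) - 1) * ((n : ℝ) - 2) * ((n : ℝ) - 3)) * ((hamX n).card : ℝ)) := by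
      rw [Finset.sum_congr rfl (fun b hb => cutA_j hn hij hif hig hjf hjg hfg
        (hcompl b hb).1 (hcompl b hb).2.1 (hcompl b hb).2.2.1 (hcompl b hb).2.2.2),
        Finset.sum_const, nsmul_eq_mul, hcardC]
    have htf : ∑ b ∈ Uᶜ, ∑ x ∈ hamX n, xval x f b
          * ((xval x i j - xval x j f + xval x f g - xval x g i) * xval x i j)
        = ((n : ℝ) - (m : ℝ)) * (4 / (((n : ℝ) - 1) * ((n : ℝ) - 2)) * ((hamX n).card : ℝ)
            - 2 / (((n : ℝ) - 1) * ((n : ℝ) - 2) * ((n : ℝ) - 3)) * ((hamX n).card : ℝ)) := by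
      rw [Finset.sum_congr rfl (fun b hb => cutA_f hn hij hif hig hjf hjg hfg
        (hcompl b hb).1 (hcompl b hb).2.1 (hcompl b hb).2.2.1 (hcompl b hb).2.2.2),
        Finset.sum_const, nsmul_eq_mul, hcardC]
    have htg : ∑ b ∈ Uᶜ, ∑ x ∈ hamX n, xval x g b
          * ((xval x i j - xval x j f + xval x f g - xval x g i) * xval x i j)
        = ((n : ℝ) - (m : ℝ)) * (4 / (((n : ℝ) - 1) * ((n : ℝ) - 2)) * ((hamX n).card : ℝ)
            - 2 / (((n : ℝ) - 1) * ((n : ℝ) - 2) * ((n : ℝ) - 3)) * ((hamX n).card : ℝ)) := by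
      rw [Finset.sum_congr rfl (fun b hb => cutA_g hn hij hif hig hjf hjg hfg
        (hcompl b hb).1 (hcompl b hb).2.1 (hcompl b hb).2.2.1 (hcompl b hb).2.2.2),
        Finset.sum_const, nsmul_eq_mul, hcardC]
    have hrest : ∑ a ∈ (((U.erase i).erase j).erase f).erase g, ∑ b ∈ Uᶜ,
          ∑ x ∈ hamX n, xval x a b
            * ((xval x i j - xval x j f + xval x f g - xval x g i) * xval x i j)
        = ((m : ℝ) - 4) * (((n : ℝ) - (m : ℝ))
            * (4 / (((n : ℝ) - 1) * ((n : ℝ) - 2)) * ((hamX n).card : ℝ))) := by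
      have hper : ∀ a ∈ (((U.erase i).erase j).erase f).erase g, ∑ b ∈ Uᶜ,
            ∑ x ∈ hamX n, xval x a b
              * ((xval x i j - xval x j f + xval x f g - xval x g i) * xval x i j)
          = ((n : ℝ) - (m : ℝ))
              * (4 / (((n : ℝ) - 1) * ((n : ℝ) - 2)) * ((hamX n).card : ℝ)) := by
        intro a ha
        have hag : a ≠ g := (mem_erase.mp ha).1
        have haf : a ≠ f := (mem_erase.mp (mem_erase.mp ha).2).1
        have haj : a ≠ j := (mem_erase.mp (mem_erase.mp (mem_erase.mp ha).2).2).1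
        have hai : a ≠ i :=
          (mem_erase.mp (mem_erase.mp (mem_erase.mp (mem_erase.mp ha).2).2).2).1
        have haU : a ∈ U :=
          (mem_erase.mp (mem_erase.mp (mem_erase.mp (mem_erase.mp ha).2).2).2).2
        have hab : ∀ b ∈ Uᶜ, a ≠ b := by
          intro b hb h
          rw [Finset.mem_compl] at hb
          exact hb (h ▸ haU)
        rw [Finset.sum_congr rfl (fun b hb => cutA_o hn hij hif hig hjf hjg hfg
          hai haj haf hag (hcompl b hb).1 (hcompl b hb).2.1 (hcompl b hb).2.2.1
          (hcompl b hb).2.2.2 (hab b hb)),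
          Finset.sum_const, nsmul_eq_mul, hcardC]
      rw [Finset.sum_congr rfl hper, Finset.sum_const, nsmul_eq_mul]
      congr 1
      have : ((((U.erase i).erase j).erase f).erase g).card = m - 4 := by
        rw [Finset.card_erase_of_mem hmemg, Finset.card_erase_of_mem hmemf,
          Finset.card_erase_of_mem hmemj, Finset.card_erase_of_mem hmemi, hUcard]
        omega
      rw [this, Nat.cast_sub (by omega)]
      norm_num
    rw [hti, htj, htf, htg, hrest]
    ring
  rw [hstep1, hA, hB]
  have h8 : (8 : ℝ) ≤ (n : ℝ) := by exact_mod_cast hn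
  have hm4' : (4 : ℝ) ≤ (m : ℝ) := by exact_mod_cast hm4
  have hmn2 : 2 * (m : ℝ) ≤ (n : ℝ) := by exact_mod_cast hmn
  have hn1 : (n : ℝ) - 1 ≠ 0 := by intro h; nlinarith
  have hn2 : (n : ℝ) - 2 ≠ 0 := by intro h; nlinarith
  have hn3 : (n : ℝ) - 3 ≠ 0 := by intro h; nlinarith
  have hm1 : (m : ℝ) - 1 ≠ 0 := by intro h; nlinarith
  have hK : (m : ℝ) * ((n : ℝ) - (m : ℝ)) + 1 - (n : ℝ) ≠ 0 := by
    have : (m : ℝ) * ((n : ℝ) - (m : ℝ)) + 1 - (n : ℝ)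
        = ((m : ℝ) - 1) * (((n : ℝ) - (m : ℝ)) - 1) := by ring
    rw [this]
    apply mul_ne_zero
    · intro h; nlinarith
    · intro h; nlinarith
  field_simp
  ring

lemma hU_relabel {n : ℕ} {U : Finset (Fin n)} (π : Equiv.Perm (Fin n))
    (hπU : ∀ v, π v ∈ U ↔ v ∈ U) (x : EdgeIdx n → ℝ) :
    hU U (fun e => x (eMap π e)) = hU U x := by
  rw [hU, hU]
  have hinner : (∑ u ∈ U, ∑ v ∈ Uᶜ, xval (fun e => x (eMap π e)) u v)
      = ∑ u ∈ U, ∑ v ∈ Uᶜ, xval x u v := by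
    have hUc : ∀ v, v ∈ Uᶜ → π v ∈ (Uᶜ : Finset (Fin n)) := by
      intro v hv
      rw [Finset.mem_compl] at hv ⊢
      exact fun h => hv ((hπU v).mp h)
    have hUc' : ∀ v, v ∈ Uᶜ → π⁻¹ v ∈ (Uᶜ : Finset (Fin n)) := by
      intro v hv
      rw [Finset.mem_compl] at hv ⊢
      intro h
      apply hv
      have := (hπU (π⁻¹ v)).mpr h
      simpa using this
    calc ∑ u ∈ U, ∑ v ∈ Uᶜ, xval (fun e => x (eMap π e)) u v
        = ∑ u ∈ U, ∑ v ∈ Uᶜ, xval x (π u) (π v) :=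
          Finset.sum_congr rfl fun u _ => Finset.sum_congr rfl fun v _ => xval_relabel π x u v
      _ = ∑ u ∈ U, ∑ v ∈ Uᶜ, xval x (π u) v := by
          refine Finset.sum_congr rfl fun u _ => ?_
          refine Finset.sum_nbij' (fun v => π v) (fun v => π⁻¹ v)
            (fun v hv => hUc v hv) (fun v hv => hUc' v hv)
            (fun v _ => by simp) (fun v _ => by simp) (fun v _ => rfl)
      _ = ∑ u ∈ U, ∑ v ∈ Uᶜ, xval x u v := by
          refine Finset.sum_nbij' (fun u => π u) (fun u => π⁻¹ u)
            (fun u hu => (hπU u).mpr hu)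
            (fun u hu => by
              have : π (π⁻¹ u) ∈ U ↔ π⁻¹ u ∈ U := hπU (π⁻¹ u)
              simp only [Equiv.Perm.coe_inv, Equiv.apply_symm_apply] at this
              exact this.mp hu)
            (fun u _ => by simp) (fun u _ => by simp) (fun u _ => rfl)
  rw [hinner]

lemma swap_mem_iff {n : ℕ} {U : Finset (Fin n)} {a b : Fin n} (haU : a ∈ U) (hbU : b ∈ U) :
    ∀ v, (Equiv.swap a b) v ∈ U ↔ v ∈ U := by
  intro v
  rcases eq_or_ne v a with rfl | hva
  · rw [Equiv.swap_apply_left]; exact ⟨fun _ => haU, fun _ => hbU⟩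
  rcases eq_or_ne v b with rfl | hvb
  · rw [Equiv.swap_apply_right]; exact ⟨fun _ => hbU, fun _ => haU⟩
  · rw [Equiv.swap_apply_of_ne_of_ne hva hvb]

lemma mul_mem_iff {n : ℕ} {U : Finset (Fin n)} (π τ : Equiv.Perm (Fin n))
    (hπ : ∀ v, π v ∈ U ↔ v ∈ U) (hτ : ∀ v, τ v ∈ U ↔ v ∈ U) :
    ∀ v, (π * τ) v ∈ U ↔ v ∈ U := fun v => by
  rw [Equiv.Perm.mul_apply, hπ, hτ]

lemma relabel_sum_quad {n : ℕ} {U : Finset (Fin n)} (π : Equiv.Perm (Fin n))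
    (hπU : ∀ v, π v ∈ U ↔ v ∈ U) (i j f g p q : Fin n) :
    ∑ x ∈ hamX n, hU U x * ((xval x (π i) (π j) - xval x (π j) (π f)
        + xval x (π f) (π g) - xval x (π g) (π i)) * xval x (π p) (π q))
      = ∑ x ∈ hamX n, hU U x
          * ((xval x i j - xval x j f + xval x f g - xval x g i) * xval x p q) := by
  rw [← sum_relabel π (fun y => hU U y
    * ((xval y i j - xval y j f + xval y f g - xval y g i) * xval y p q))]
  refine Finset.sum_congr rfl fun x _ => ?_
  rw [hU_relabel π hπU x, xval_relabel π x i j, xval_relabel π x j f, xval_relabel π x f g,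
    xval_relabel π x g i, xval_relabel π x p q]

lemma relabel_sum_quad0 {n : ℕ} {U : Finset (Fin n)} (π : Equiv.Perm (Fin n))
    (hπU : ∀ v, π v ∈ U ↔ v ∈ U) (i j f g : Fin n) :
    ∑ x ∈ hamX n, hU U x * (xval x (π i) (π j) - xval x (π j) (π f)
        + xval x (π f) (π g) - xval x (π g) (π i))
      = ∑ x ∈ hamX n, hU U x * (xval x i j - xval x j f + xval x f g - xval x g i) := by
  rw [← sum_relabel π (fun y => hU U y
    * (xval y i j - xval y j f + xval y f g - xval y g i))]
  refine Finset.sum_congr rfl fun x _ => ?_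
  rw [hU_relabel π hπU x, xval_relabel π x i j, xval_relabel π x j f, xval_relabel π x f g,
    xval_relabel π x g i]

section Claims

variable {n : ℕ} {U : Finset (Fin n)} {i j f g : Fin n}

lemma claim_const (hjU : j ∈ U) (hgU : g ∈ U)
    (hij : i ≠ j) (hif : i ≠ f) (hig : i ≠ g)
    (hjf : j ≠ f) (hjg : j ≠ g) (hfg : f ≠ g) :
    ∑ x ∈ hamX n, hU U x * (xval x i j - xval x j f + xval x f g - xval x g i) = 0 := by
  have h := relabel_sum_quad0 (Equiv.swap j g) (swap_mem_iff hjU hgU) i j f g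
  rw [Equiv.swap_apply_of_ne_of_ne hij hig, Equiv.swap_apply_left,
    Equiv.swap_apply_of_ne_of_ne (Ne.symm hjf) hfg, Equiv.swap_apply_right] at h
  have hpt : ∀ x : EdgeIdx n → ℝ, hU U x * (xval x i g - xval x g f + xval x f j - xval x j i)
      = -(hU U x * (xval x i j - xval x j f + xval x f g - xval x g i)) := by
    intro x
    rw [xval_comm x i g, xval_comm x g f, xval_comm x f j, xval_comm x j i]
    ring
  rw [Finset.sum_congr rfl (fun x _ => hpt x), Finset.sum_neg_distrib] at h
  linarith [h]

lemma claim_zero_jg (hjU : j ∈ U) (hgU : g ∈ U)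
    (hij : i ≠ j) (hif : i ≠ f) (hig : i ≠ g)
    (hjf : j ≠ f) (hjg : j ≠ g) (hfg : f ≠ g)
    {p q : Fin n} (hpj : p ≠ j) (hpg : p ≠ g) (hqj : q ≠ j) (hqg : q ≠ g) :
    ∑ x ∈ hamX n, hU U x
        * ((xval x i j - xval x j f + xval x f g - xval x g i) * xval x p q) = 0 := by
  have h := relabel_sum_quad (Equiv.swap j g) (swap_mem_iff hjU hgU) i j f g p q
  rw [Equiv.swap_apply_of_ne_of_ne hij hig, Equiv.swap_apply_left,
    Equiv.swap_apply_of_ne_of_ne (Ne.symm hjf) hfg, Equiv.swap_apply_right,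
    Equiv.swap_apply_of_ne_of_ne hpj hpg, Equiv.swap_apply_of_ne_of_ne hqj hqg] at h
  have hpt : ∀ x : EdgeIdx n → ℝ,
      hU U x * ((xval x i g - xval x g f + xval x f j - xval x j i) * xval x p q)
      = -(hU U x * ((xval x i j - xval x j f + xval x f g - xval x g i) * xval x p q)) := by
    intro x
    rw [xval_comm x i g, xval_comm x g f, xval_comm x f j, xval_comm x j i]
    ring
  rw [Finset.sum_congr rfl (fun x _ => hpt x), Finset.sum_neg_distrib] at h
  linarith [h]

lemma claim_zero_if (hiU : i ∈ U) (hfU : f ∈ U)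
    (hij : i ≠ j) (hif : i ≠ f) (hig : i ≠ g)
    (hjf : j ≠ f) (hjg : j ≠ g) (hfg : f ≠ g)
    {p q : Fin n} (hpi : p ≠ i) (hpf : p ≠ f) (hqi : q ≠ i) (hqf : q ≠ f) :
    ∑ x ∈ hamX n, hU U x
        * ((xval x i j - xval x j f + xval x f g - xval x g i) * xval x p q) = 0 := by
  have h := relabel_sum_quad (Equiv.swap i f) (swap_mem_iff hiU hfU) i j f g p q
  rw [Equiv.swap_apply_left, Equiv.swap_apply_of_ne_of_ne (Ne.symm hij) hjf,
    Equiv.swap_apply_right, Equiv.swap_apply_of_ne_of_ne (Ne.symm hig) (Ne.symm hfg),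
    Equiv.swap_apply_of_ne_of_ne hpi hpf, Equiv.swap_apply_of_ne_of_ne hqi hqf] at h
  have hpt : ∀ x : EdgeIdx n → ℝ,
      hU U x * ((xval x f j - xval x j i + xval x i g - xval x g f) * xval x p q)
      = -(hU U x * ((xval x i j - xval x j f + xval x f g - xval x g i) * xval x p q)) := by
    intro x
    rw [xval_comm x f j, xval_comm x j i, xval_comm x i g, xval_comm x g f]
    ring
  rw [Finset.sum_congr rfl (fun x _ => hpt x), Finset.sum_neg_distrib] at h
  linarith [h]

lemma claim_fg (hiU : i ∈ U) (hjU : j ∈ U) (hfU : f ∈ U) (hgU : g ∈ U)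
    (hij : i ≠ j) (hif : i ≠ f) (hig : i ≠ g)
    (hjf : j ≠ f) (hjg : j ≠ g) (hfg : f ≠ g) :
    ∑ x ∈ hamX n, hU U x
        * ((xval x i j - xval x j f + xval x f g - xval x g i) * xval x f g)
      = ∑ x ∈ hamX n, hU U x
          * ((xval x i j - xval x j f + xval x f g - xval x g i) * xval x i j) := by
  set π : Equiv.Perm (Fin n) := Equiv.swap i f * Equiv.swap j g with hπ
  have hπU : ∀ v, π v ∈ U ↔ v ∈ U :=
    mul_mem_iff _ _ (swap_mem_iff hiU hfU) (swap_mem_iff hjU hgU)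
  have hπi : π i = f := by
    rw [hπ, Equiv.Perm.mul_apply, Equiv.swap_apply_of_ne_of_ne hij hig,
      Equiv.swap_apply_left]
  have hπj : π j = g := by
    rw [hπ, Equiv.Perm.mul_apply, Equiv.swap_apply_left,
      Equiv.swap_apply_of_ne_of_ne (Ne.symm hig) (Ne.symm hfg)]
  have hπf : π f = i := by
    rw [hπ, Equiv.Perm.mul_apply, Equiv.swap_apply_of_ne_of_ne (Ne.symm hjf) hfg,
      Equiv.swap_apply_right]
  have hπg : π g = j := by
    rw [hπ, Equiv.Perm.mul_apply, Equiv.swap_apply_right,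
      Equiv.swap_apply_of_ne_of_ne (Ne.symm hij) hjf]
  have h := relabel_sum_quad π hπU i j f g i j
  rw [hπi, hπj, hπf, hπg] at h
  have hpt : ∀ x : EdgeIdx n → ℝ,
      hU U x * ((xval x f g - xval x g i + xval x i j - xval x j f) * xval x f g)
      = hU U x * ((xval x i j - xval x j f + xval x f g - xval x g i) * xval x f g) := by
    intro x; ring
  rw [Finset.sum_congr rfl (fun x _ => hpt x)] at h
  exact h

lemma rotPerm_vals (hij : i ≠ j) (hif : i ≠ f) (hig : i ≠ g)
    (hjf : j ≠ f) (hjg : j ≠ g) (hfg : f ≠ g) :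
    (Equiv.swap i j * Equiv.swap j f * Equiv.swap f g) i = j
    ∧ (Equiv.swap i j * Equiv.swap j f * Equiv.swap f g) j = f
    ∧ (Equiv.swap i j * Equiv.swap j f * Equiv.swap f g) f = g
    ∧ (Equiv.swap i j * Equiv.swap j f * Equiv.swap f g) g = i := by
  refine ⟨?_, ?_, ?_, ?_⟩
  · rw [Equiv.Perm.mul_apply, Equiv.Perm.mul_apply,
      Equiv.swap_apply_of_ne_of_ne hif hig, Equiv.swap_apply_of_ne_of_ne hij hif,
      Equiv.swap_apply_left]
  · rw [Equiv.Perm.mul_apply, Equiv.Perm.mul_apply,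
      Equiv.swap_apply_of_ne_of_ne hjf hjg, Equiv.swap_apply_left,
      Equiv.swap_apply_of_ne_of_ne (Ne.symm hif) (Ne.symm hjf)]
  · rw [Equiv.Perm.mul_apply, Equiv.Perm.mul_apply, Equiv.swap_apply_left,
      Equiv.swap_apply_of_ne_of_ne (Ne.symm hjg) (Ne.symm hfg),
      Equiv.swap_apply_of_ne_of_ne (Ne.symm hig) (Ne.symm hjg)]
  · rw [Equiv.Perm.mul_apply, Equiv.Perm.mul_apply, Equiv.swap_apply_right,
      Equiv.swap_apply_right, Equiv.swap_apply_right]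

lemma claim_jf (hiU : i ∈ U) (hjU : j ∈ U) (hfU : f ∈ U) (hgU : g ∈ U)
    (hij : i ≠ j) (hif : i ≠ f) (hig : i ≠ g)
    (hjf : j ≠ f) (hjg : j ≠ g) (hfg : f ≠ g) :
    ∑ x ∈ hamX n, hU U x
        * ((xval x i j - xval x j f + xval x f g - xval x g i) * xval x j f)
      = -(∑ x ∈ hamX n, hU U x
          * ((xval x i j - xval x j f + xval x f g - xval x g i) * xval x i j)) := by
  set π : Equiv.Perm (Fin n) := Equiv.swap i j * Equiv.swap j f * Equiv.swap f g with hπ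
  have hπU : ∀ v, π v ∈ U ↔ v ∈ U :=
    mul_mem_iff _ _ (mul_mem_iff _ _ (swap_mem_iff hiU hjU) (swap_mem_iff hjU hfU))
      (swap_mem_iff hfU hgU)
  obtain ⟨hπi, hπj, hπf, hπg⟩ := rotPerm_vals hij hif hig hjf hjg hfg
  have h := relabel_sum_quad π hπU i j f g i j
  rw [hπ] at *
  rw [hπi, hπj, hπf, hπg] at h
  have hpt : ∀ x : EdgeIdx n → ℝ,
      hU U x * ((xval x j f - xval x f g + xval x g i - xval x i j) * xval x j f)
      = -(hU U x * ((xval x i j - xval x j f + xval x f g - xval x g i) * xval x j f)) := by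
    intro x; ring
  rw [Finset.sum_congr rfl (fun x _ => hpt x), Finset.sum_neg_distrib] at h
  linarith [h]

lemma claim_gi (hiU : i ∈ U) (hjU : j ∈ U) (hfU : f ∈ U) (hgU : g ∈ U)
    (hij : i ≠ j) (hif : i ≠ f) (hig : i ≠ g)
    (hjf : j ≠ f) (hjg : j ≠ g) (hfg : f ≠ g) :
    ∑ x ∈ hamX n, hU U x
        * ((xval x i j - xval x j f + xval x f g - xval x g i) * xval x g i)
      = -(∑ x ∈ hamX n, hU U x
          * ((xval x i j - xval x j f + xval x f g - xval x g i) * xval x i j)) := by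
  set π : Equiv.Perm (Fin n) := Equiv.swap i j * Equiv.swap j f * Equiv.swap f g with hπ
  have hπU : ∀ v, π v ∈ U ↔ v ∈ U :=
    mul_mem_iff _ _ (mul_mem_iff _ _ (swap_mem_iff hiU hjU) (swap_mem_iff hjU hfU))
      (swap_mem_iff hfU hgU)
  obtain ⟨hπi, hπj, hπf, hπg⟩ := rotPerm_vals hij hif hig hjf hjg hfg
  have h := relabel_sum_quad π hπU i j f g f g
  rw [hπ] at *
  rw [hπi, hπj, hπf, hπg] at h
  have hpt : ∀ x : EdgeIdx n → ℝ,
      hU U x * ((xval x j f - xval x f g + xval x g i - xval x i j) * xval x g i)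
      = -(hU U x * ((xval x i j - xval x j f + xval x f g - xval x g i) * xval x g i)) := by
    intro x; ring
  rw [Finset.sum_congr rfl (fun x _ => hpt x), Finset.sum_neg_distrib] at h
  rw [claim_fg hiU hjU hfU hgU hij hif hig hjf hjg hfg] at h
  linarith [h]

end Claims

lemma xval_eq_of_sym2_eq {n : ℕ} {p q r s : Fin n} (hpq : p ≠ q) (hrs : r ≠ s)
    (h : (s(p, q) : Sym2 (Fin n)) = s(r, s)) (x : EdgeIdx n → ℝ) :
    xval x p q = xval x r s := by
  rw [xval, xval, dif_neg hpq, dif_neg hrs]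
  exact congrArg x (Subtype.ext h)

set_option maxHeartbeats 1000000 in
lemma claim_edge {n m : ℕ} (hn : 8 ≤ n) {U : Finset (Fin n)} (hUcard : U.card = m)
    (hm4 : 4 ≤ m) (hmn : 2 * m ≤ n)
    {i j f g : Fin n} (hiU : i ∈ U) (hjU : j ∈ U) (hfU : f ∈ U) (hgU : g ∈ U)
    (hij : i ≠ j) (hif : i ≠ f) (hig : i ≠ g)
    (hjf : j ≠ f) (hjg : j ≠ g) (hfg : f ≠ g) (e : EdgeIdx n) :
    ∑ x ∈ hamX n, hU U x
        * ((xval x i j - xval x j f + xval x f g - xval x g i) * x e)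
      = (2 * ((m : ℝ) - 2) / (((n : ℝ) - 2) * ((m : ℝ) - 1))) * ((hamX n).card : ℝ)
          * quadCoef i j f g e := by
  obtain ⟨E, hE⟩ := e
  induction E using Sym2.ind with
  | _ p q =>
  have hpq : p ≠ q := by
    intro h
    exact hE (by simp [h, Sym2.isDiag_iff_proj_eq])
  have hxe : ∀ x : EdgeIdx n → ℝ, x ⟨s(p, q), hE⟩ = xval x p q := by
    intro x
    rw [xval, dif_neg hpq]
  have hquad : quadCoef i j f g ⟨s(p, q), hE⟩
      = (if (s(p, q) : Sym2 (Fin n)) = s(i, j) then (1 : ℝ) else 0)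
        - (if (s(p, q) : Sym2 (Fin n)) = s(j, f) then (1 : ℝ) else 0)
        + (if (s(p, q) : Sym2 (Fin n)) = s(f, g) then (1 : ℝ) else 0)
        - (if (s(p, q) : Sym2 (Fin n)) = s(g, i) then (1 : ℝ) else 0) := rfl
  by_cases h1 : (s(p, q) : Sym2 (Fin n)) = s(i, j)
  · have hne2 : ¬ (s(p, q) : Sym2 (Fin n)) = s(j, f) := by
      rw [h1, Sym2.eq_iff]
      rintro (⟨ha, _⟩ | ⟨ha, _⟩)
      exacts [hij ha, hif ha]
    have hne3 : ¬ (s(p, q) : Sym2 (Fin n)) = s(f, g) := by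
      rw [h1, Sym2.eq_iff]
      rintro (⟨ha, _⟩ | ⟨ha, _⟩)
      exacts [hif ha, hig ha]
    have hne4 : ¬ (s(p, q) : Sym2 (Fin n)) = s(g, i) := by
      rw [h1, Sym2.eq_iff]
      rintro (⟨ha, _⟩ | ⟨_, hb⟩)
      exacts [hig ha, hjg hb]
    rw [hquad, if_pos h1, if_neg hne2, if_neg hne3, if_neg hne4]
    have hsum : ∑ x ∈ hamX n, hU U x
          * ((xval x i j - xval x j f + xval x f g - xval x g i) * x ⟨s(p, q), hE⟩)
        = ∑ x ∈ hamX n, hU U x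
            * ((xval x i j - xval x j f + xval x f g - xval x g i) * xval x i j) :=
      Finset.sum_congr rfl fun x _ => by rw [hxe x, xval_eq_of_sym2_eq hpq hij h1 x]
    rw [hsum, main_ij hn hUcard hm4 hmn hiU hjU hfU hgU hij hif hig hjf hjg hfg]
    ring
  by_cases h2 : (s(p, q) : Sym2 (Fin n)) = s(j, f)
  · have hne3 : ¬ (s(p, q) : Sym2 (Fin n)) = s(f, g) := by
      rw [h2, Sym2.eq_iff]
      rintro (⟨ha, _⟩ | ⟨ha, _⟩)
      exacts [hjf ha, hjg ha]
    have hne4 : ¬ (s(p, q) : Sym2 (Fin n)) = s(g, i) := by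
      rw [h2, Sym2.eq_iff]
      rintro (⟨ha, _⟩ | ⟨ha, _⟩)
      exacts [hjg ha, hij ha.symm]
    rw [hquad, if_neg h1, if_pos h2, if_neg hne3, if_neg hne4]
    have hsum : ∑ x ∈ hamX n, hU U x
          * ((xval x i j - xval x j f + xval x f g - xval x g i) * x ⟨s(p, q), hE⟩)
        = ∑ x ∈ hamX n, hU U x
            * ((xval x i j - xval x j f + xval x f g - xval x g i) * xval x j f) :=
      Finset.sum_congr rfl fun x _ => by rw [hxe x, xval_eq_of_sym2_eq hpq hjf h2 x]
    rw [hsum, claim_jf hiU hjU hfU hgU hij hif hig hjf hjg hfg,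
      main_ij hn hUcard hm4 hmn hiU hjU hfU hgU hij hif hig hjf hjg hfg]
    ring
  by_cases h3 : (s(p, q) : Sym2 (Fin n)) = s(f, g)
  · have hne4 : ¬ (s(p, q) : Sym2 (Fin n)) = s(g, i) := by
      rw [h3, Sym2.eq_iff]
      rintro (⟨ha, _⟩ | ⟨ha, _⟩)
      exacts [hfg ha, hif ha.symm]
    rw [hquad, if_neg h1, if_neg h2, if_pos h3, if_neg hne4]
    have hsum : ∑ x ∈ hamX n, hU U x
          * ((xval x i j - xval x j f + xval x f g - xval x g i) * x ⟨s(p, q), hE⟩)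
        = ∑ x ∈ hamX n, hU U x
            * ((xval x i j - xval x j f + xval x f g - xval x g i) * xval x f g) :=
      Finset.sum_congr rfl fun x _ => by rw [hxe x, xval_eq_of_sym2_eq hpq hfg h3 x]
    rw [hsum, claim_fg hiU hjU hfU hgU hij hif hig hjf hjg hfg,
      main_ij hn hUcard hm4 hmn hiU hjU hfU hgU hij hif hig hjf hjg hfg]
    ring
  by_cases h4 : (s(p, q) : Sym2 (Fin n)) = s(g, i)
  · rw [hquad, if_neg h1, if_neg h2, if_neg h3, if_pos h4]
    have hsum : ∑ x ∈ hamX n, hU U x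
          * ((xval x i j - xval x j f + xval x f g - xval x g i) * x ⟨s(p, q), hE⟩)
        = ∑ x ∈ hamX n, hU U x
            * ((xval x i j - xval x j f + xval x f g - xval x g i) * xval x g i) :=
      Finset.sum_congr rfl fun x _ => by
        rw [hxe x, xval_eq_of_sym2_eq hpq (Ne.symm hig) h4 x]
    rw [hsum, claim_gi hiU hjU hfU hgU hij hif hig hjf hjg hfg,
      main_ij hn hUcard hm4 hmn hiU hjU hfU hgU hij hif hig hjf hjg hfg]
    ring
  · have key : (p ≠ j ∧ p ≠ g ∧ q ≠ j ∧ q ≠ g) ∨ (p ≠ i ∧ p ≠ f ∧ q ≠ i ∧ q ≠ f) := by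
      by_contra hc
      push_neg at hc
      obtain ⟨hA, hB⟩ := hc
      have hA' : p = j ∨ p = g ∨ q = j ∨ q = g := by tauto
      have hB' : p = i ∨ p = f ∨ q = i ∨ q = f := by tauto
      rcases hA' with rfl | rfl | rfl | rfl
      · rcases hB' with h | h | h | h
        · exact hij h.symm
        · exact hjf h
        · subst h; exact h1 Sym2.eq_swap
        · subst h; exact h2 rfl
      · rcases hB' with h | h | h | h
        · exact hig h.symm
        · exact hfg h.symm
        · subst h; exact h4 rfl
        · subst h; exact h3 Sym2.eq_swap
      · rcases hB' with h | h | h | h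
        · subst h; exact h1 rfl
        · subst h; exact h2 Sym2.eq_swap
        · exact hij h.symm
        · exact hjf h
      · rcases hB' with h | h | h | h
        · subst h; exact h4 Sym2.eq_swap
        · subst h; exact h3 rfl
        · exact hig h.symm
        · exact hfg h.symm
    rw [hquad, if_neg h1, if_neg h2, if_neg h3, if_neg h4]
    have hsum : ∑ x ∈ hamX n, hU U x
          * ((xval x i j - xval x j f + xval x f g - xval x g i) * x ⟨s(p, q), hE⟩)
        = ∑ x ∈ hamX n, hU U x
            * ((xval x i j - xval x j f + xval x f g - xval x g i) * xval x p q) :=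
      Finset.sum_congr rfl fun x _ => by rw [hxe x]
    rw [hsum]
    rcases key with ⟨k1, k2, k3, k4⟩ | ⟨k1, k2, k3, k4⟩
    · rw [claim_zero_jg hjU hgU hij hif hig hjf hjg hfg k1 k2 k3 k4]
      ring
    · rw [claim_zero_if hiU hfU hij hif hig hjf hjg hfg k1 k2 k3 k4]
      ring

lemma quad_sum {n : ℕ} {i j f g : Fin n} (hij : i ≠ j) (hjf : j ≠ f) (hfg : f ≠ g)
    (hgi : g ≠ i) (x : EdgeIdx n → ℝ) :
    ∑ e : EdgeIdx n, quadCoef i j f g e * x e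
      = xval x i j - xval x j f + xval x f g - xval x g i := by
  have hone : ∀ (r s : Fin n), r ≠ s →
      ∑ e : EdgeIdx n, (if (e : Sym2 (Fin n)) = s(r, s) then (1 : ℝ) else 0) * x e
        = xval x r s := by
    intro r s hrs
    have hd : ¬ (s(r, s) : Sym2 (Fin n)).IsDiag := by
      simpa [Sym2.isDiag_iff_proj_eq] using hrs
    rw [xval, dif_neg hrs]
    rw [Finset.sum_eq_single (⟨s(r, s), hd⟩ : EdgeIdx n)]
    · rw [if_pos rfl, one_mul]
    · intro b _ hb
      rw [if_neg fun hc => hb (Subtype.ext hc), zero_mul]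
    · intro h
      exact absurd (Finset.mem_univ _) h
  calc ∑ e : EdgeIdx n, quadCoef i j f g e * x e
      = ∑ e : EdgeIdx n, ((if (e : Sym2 (Fin n)) = s(i, j) then (1 : ℝ) else 0) * x e
          - (if (e : Sym2 (Fin n)) = s(j, f) then (1 : ℝ) else 0) * x e
          + (if (e : Sym2 (Fin n)) = s(f, g) then (1 : ℝ) else 0) * x e
          - (if (e : Sym2 (Fin n)) = s(g, i) then (1 : ℝ) else 0) * x e) := by
        refine Finset.sum_congr rfl fun e _ => ?_
        rw [quadCoef]
        ring
    _ = _ := by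
        rw [Finset.sum_sub_distrib, Finset.sum_add_distrib, Finset.sum_sub_distrib,
          hone i j hij, hone j f hjf, hone f g hfg, hone g i hgi]

end SubAux

/-- **eigenvector of `A_U`, first kind.**  Let `n ≥ 8`,
`U ⊂ {1, …, n}`, `|U| = m`, `4 ≤ m ≤ n/2`, and let `i, j, f, g ∈ U` be distinct.
The degree-1 polynomial `u(x) = x_{ij} - x_{jf} + x_{fg} - x_{gi}` satisfies,
for every degree-≤1 polynomial `w(x) = w₀ + Σ_e w_e x_e`,
`(1/|X|) Σ_{x∈X} h_U(x) u(x) w(x) = (2(m-2)/((n-2)(m-1))) ⟨u, w⟩`;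
i.e. `u` is an eigenvector of the matrix of `q_{h_U}` with eigenvalue
`2(m-2)/((n-2)(m-1))`. -/
theorem eigenvector_of_subtour_form_inside_U
    (n m : ℕ) (hn : 8 ≤ n) (U : Finset (Fin n)) (hUcard : U.card = m)
    (hm4 : 4 ≤ m) (hmn : 2 * m ≤ n)
    (i j f g : Fin n) (hiU : i ∈ U) (hjU : j ∈ U) (hfU : f ∈ U) (hgU : g ∈ U)
    (hij : i ≠ j) (hif : i ≠ f) (hig : i ≠ g)
    (hjf : j ≠ f) (hjg : j ≠ g) (hfg : f ≠ g)
    (w0 : ℝ) (w : EdgeIdx n → ℝ) :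
    ((hamX n).card : ℝ)⁻¹ * ∑ x ∈ hamX n,
        hU U x * (∑ e : EdgeIdx n, quadCoef i j f g e * x e) *
          (w0 + ∑ e : EdgeIdx n, w e * x e)
      = (2 * ((m : ℝ) - 2) / (((n : ℝ) - 2) * ((m : ℝ) - 1))) *
          ∑ e : EdgeIdx n, quadCoef i j f g e * w e := by
  have hN : ((hamX n).card : ℝ) ≠ 0 := by
    have := Finset.card_pos.mpr (SubAux.hamX_nonempty (n := n))
    exact_mod_cast this.ne'
  have hstep : ∑ x ∈ hamX n,
        hU U x * (∑ e : EdgeIdx n, quadCoef i j f g e * x e) *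
          (w0 + ∑ e : EdgeIdx n, w e * x e)
      = (∑ x ∈ hamX n, hU U x * (xval x i j - xval x j f + xval x f g - xval x g i)) * w0
        + ∑ e : EdgeIdx n, w e * (∑ x ∈ hamX n, hU U x
            * ((xval x i j - xval x j f + xval x f g - xval x g i) * x e)) := by
    calc ∑ x ∈ hamX n,
          hU U x * (∑ e : EdgeIdx n, quadCoef i j f g e * x e) *
            (w0 + ∑ e : EdgeIdx n, w e * x e)
        = ∑ x ∈ hamX n,
            (hU U x * (xval x i j - xval x j f + xval x f g - xval x g i) * w0
              + ∑ e : EdgeIdx n, w e * (hU U x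
                  * ((xval x i j - xval x j f + xval x f g - xval x g i) * x e))) := by
          refine Finset.sum_congr rfl fun x _ => ?_
          rw [SubAux.quad_sum hij hjf hfg (Ne.symm hig) x, mul_add, Finset.mul_sum]
          congr 1
          exact Finset.sum_congr rfl fun e _ => by ring
      _ = (∑ x ∈ hamX n, hU U x * (xval x i j - xval x j f + xval x f g - xval x g i)) * w0
          + ∑ x ∈ hamX n, ∑ e : EdgeIdx n, w e * (hU U x
              * ((xval x i j - xval x j f + xval x f g - xval x g i) * x e)) := by
          rw [Finset.sum_add_distrib, ← Finset.sum_mul]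
      _ = _ := by
          congr 1
          rw [Finset.sum_comm]
          exact Finset.sum_congr rfl fun e _ => by rw [← Finset.mul_sum]
  rw [hstep, SubAux.claim_const hjU hgU hij hif hig hjf hjg hfg, zero_mul, zero_add]
  have hedge : ∀ e : EdgeIdx n, (∑ x ∈ hamX n, hU U x
        * ((xval x i j - xval x j f + xval x f g - xval x g i) * x e))
      = (2 * ((m : ℝ) - 2) / (((n : ℝ) - 2) * ((m : ℝ) - 1))) * ((hamX n).card : ℝ)
          * quadCoef i j f g e :=
    fun e => SubAux.claim_edge hn hUcard hm4 hmn hiU hjU hfU hgU hij hif hig hjf hjg hfg e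
  have hsum2 : ∑ e : EdgeIdx n, w e * (∑ x ∈ hamX n, hU U x
        * ((xval x i j - xval x j f + xval x f g - xval x g i) * x e))
      = ((2 * ((m : ℝ) - 2) / (((n : ℝ) - 2) * ((m : ℝ) - 1)))
          * ∑ e : EdgeIdx n, quadCoef i j f g e * w e) * ((hamX n).card : ℝ) := by
    rw [Finset.mul_sum, Finset.sum_mul]
    exact Finset.sum_congr rfl fun e _ => by rw [hedge e]; ring
  rw [hsum2]
  field_simp
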